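/- arXiv:0804.1687 — 5 statements merged into one kernel-verified Lean document; each statement's English description precedes it below -/
import Mathlib

section
/- Let K be a field and f ∈ K(x) indecomposable with deg f composite (i.e., deg f = a·b for some integers a, b ≥ 2). Then the stabilizer G(f) is trivial. -/
open Polynomial

/-- The degree of a rational function. -/
noncomputable def RatFunc.deg {K : Type*} [Field K] (f : RatFunc K) : ℕ :=
  max f.num.natDegree f.denom.natDegree

/-- Composition of rational functions: `g.comp h = g ∘ h`. -/
noncomputable def RatFunc.comp {K : Type*} [Field K] (g h : RatFunc K) : RatFunc K :=
  (Polynomial.aeval h g.num) / (Polynomial.aeval h g.denom)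

/-- A rational function is in normal form if the degree of its numerator is larger than
the degree of its denominator and `0` is a root of the numerator. -/
def RatFunc.IsNormalForm {K : Type*} [Field K] (f : RatFunc K) : Prop :=
  f.denom.natDegree < f.num.natDegree ∧ f.num.eval 0 = 0

namespace FixAux
open IntermediateField

variable {K : Type*} [Field K]

lemma algMap_eq_aeval (p : K[X]) :
    algebraMap K[X] (RatFunc K) p = aeval (RatFunc.X : RatFunc K) p := by
  rw [← RatFunc.algebraMap_X, aeval_algebraMap_apply, aeval_X_left_apply]

lemma transcendental_X : Transcendental K (RatFunc.X : RatFunc K) := by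
  rw [transcendental_iff_injective]
  intro p q h
  rw [← algMap_eq_aeval, ← algMap_eq_aeval] at h
  exact RatFunc.algebraMap_injective K h

lemma deg_algebraMap (c : K) : (algebraMap K (RatFunc K) c).deg = 0 := by
  rw [IsScalarTower.algebraMap_apply K K[X] (RatFunc K), RatFunc.deg,
    RatFunc.num_algebraMap, RatFunc.denom_algebraMap]
  simp [Polynomial.algebraMap_eq]

lemma exists_const_of_deg_eq_zero {r : RatFunc K} (h : r.deg = 0) :
    ∃ c : K, algebraMap K (RatFunc K) c = r := by
  rw [RatFunc.deg, Nat.max_eq_zero_iff] at h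
  have hd : r.denom = 1 := by
    have := (RatFunc.monic_denom r).natDegree_eq_zero.mp h.2
    exact this
  obtain ⟨c, hc⟩ := Polynomial.natDegree_eq_zero.mp h.1
  refine ⟨c, ?_⟩
  rw [← RatFunc.num_div_denom r, hd, map_one, div_one, ← hc,
    IsScalarTower.algebraMap_apply K K[X] (RatFunc K), Polynomial.algebraMap_eq]

lemma deg_ne_zero_of_notMem {r : RatFunc K}
    (h : r ∉ Set.range (algebraMap K (RatFunc K))) : r.deg ≠ 0 := by
  intro h0
  obtain ⟨c, hc⟩ := exists_const_of_deg_eq_zero h0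
  exact h ⟨c, hc⟩

lemma notMem_range_of_deg_ne_zero {r : RatFunc K} (h : r.deg ≠ 0) :
    r ∉ Set.range (algebraMap K (RatFunc K)) := by
  rintro ⟨c, rfl⟩
  exact h (deg_algebraMap c)

lemma algHom_apply_eq_comp (ψ : RatFunc K →ₐ[K] RatFunc K) (r : RatFunc K) :
    ψ r = RatFunc.comp r (ψ RatFunc.X) := by
  conv_lhs => rw [← RatFunc.num_div_denom r]
  rw [map_div₀, RatFunc.comp]
  congr 1 <;> rw [algMap_eq_aeval, ← aeval_algHom_apply]

lemma algHom_ext {ψ₁ ψ₂ : RatFunc K →ₐ[K] RatFunc K} (h : ψ₁ RatFunc.X = ψ₂ RatFunc.X) :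
    ψ₁ = ψ₂ :=
  AlgHom.ext fun r => by rw [algHom_apply_eq_comp ψ₁, algHom_apply_eq_comp ψ₂, h]

lemma deg_div_le (c D : K[X]) (hD : D ≠ 0) :
    (algebraMap K[X] (RatFunc K) c / algebraMap K[X] (RatFunc K) D).deg ≤
      max c.natDegree D.natDegree := by
  rcases eq_or_ne c 0 with rfl | hc
  · simp only [map_zero, zero_div]
    have : (0 : RatFunc K).deg = 0 := by
      rw [RatFunc.deg, RatFunc.num_zero, RatFunc.denom_zero]
      simp
    omega
  · have h1 : (algebraMap K[X] (RatFunc K) c / algebraMap K[X] (RatFunc K) D).num.natDegree ≤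
        c.natDegree := Polynomial.natDegree_le_of_dvd (RatFunc.num_div_dvd c hD) hc
    have h2 : (algebraMap K[X] (RatFunc K) c / algebraMap K[X] (RatFunc K) D).denom.natDegree ≤
        D.natDegree := Polynomial.natDegree_le_of_dvd (RatFunc.denom_div_dvd c D) hD
    exact max_le_max h1 h2

lemma subfield_eq_top (L : Subfield (RatFunc K)) (hK : ∀ c : K, algebraMap K (RatFunc K) c ∈ L)
    (hX : RatFunc.X ∈ L) : L = ⊤ := by
  have hp : ∀ p : K[X], algebraMap K[X] (RatFunc K) p ∈ L := by
    intro p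
    induction p using Polynomial.induction_on with
    | C c =>
        have := hK c
        rwa [IsScalarTower.algebraMap_apply K K[X] (RatFunc K), Polynomial.algebraMap_eq] at this
    | add p q hp hq => rw [map_add]; exact add_mem hp hq
    | monomial n c ih =>
        rw [map_mul, map_pow, RatFunc.algebraMap_X]
        exact mul_mem (by
          have := hK c
          rwa [IsScalarTower.algebraMap_apply K K[X] (RatFunc K), Polynomial.algebraMap_eq]
            at this) (pow_mem hX _)
  rw [eq_top_iff]
  intro r _
  rw [← RatFunc.num_div_denom r]
  exact div_mem (hp _) (hp _)



lemma annihilator {w : RatFunc K} (hw : w.deg ≠ 0) (E : IntermediateField K (RatFunc K))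
    (hwE : w ∈ E) :
    ∃ P : Polynomial E, P.Monic ∧ P.natDegree = w.deg ∧
      aeval (RatFunc.X : RatFunc K) P = 0 := by
  have hw0 : w ≠ 0 := by
    rintro rfl
    apply hw
    rw [RatFunc.deg, RatFunc.num_zero, RatFunc.denom_zero]
    simp
  have hNdef : w.deg = max w.num.natDegree w.denom.natDegree := rfl
  set P₀ : Polynomial E :=
    w.num.map (algebraMap K E) - Polynomial.C (⟨w, hwE⟩ : E) * (w.denom.map (algebraMap K E))
    with hP₀
  have halgw : algebraMap E (RatFunc K) (⟨w, hwE⟩ : E) = w := rfl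
  have hKE : ∀ c : K, algebraMap E (RatFunc K) (algebraMap K E c) = algebraMap K (RatFunc K) c :=
    fun c => (IsScalarTower.algebraMap_apply K E (RatFunc K) c).symm
  have hcoeff : ∀ j, algebraMap E (RatFunc K) (P₀.coeff j) =
      algebraMap K (RatFunc K) (w.num.coeff j) - w * algebraMap K (RatFunc K) (w.denom.coeff j) := by
    intro j
    rw [hP₀, Polynomial.coeff_sub, Polynomial.coeff_C_mul, Polynomial.coeff_map,
      Polynomial.coeff_map, RingHom.map_sub, RingHom.map_mul, hKE, hKE, halgw]
  have hlead : P₀.coeff w.deg ≠ 0 := by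
    intro h0
    have h1 := hcoeff w.deg
    rw [h0, map_zero] at h1
    by_cases hdN : w.denom.coeff w.deg = 0
    · have hnN : w.num.coeff w.deg ≠ 0 := by
        rcases max_choice w.num.natDegree w.denom.natDegree with h | h
        · rw [hNdef, h]
          exact Polynomial.leadingCoeff_ne_zero.mpr (RatFunc.num_ne_zero hw0)
        · exfalso
          apply Polynomial.leadingCoeff_ne_zero.mpr (RatFunc.denom_ne_zero w)
          rw [Polynomial.leadingCoeff, ← h, ← hNdef]
          exact hdN
      rw [hdN, map_zero, mul_zero, sub_zero] at h1
      exact hnN ((_root_.map_eq_zero (algebraMap K (RatFunc K))).mp h1.symm)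
    · apply hw
      have hd0 : algebraMap K (RatFunc K) (w.denom.coeff w.deg) ≠ 0 := by
        simpa using hdN
      have hweq : w = algebraMap K (RatFunc K) (w.num.coeff w.deg / w.denom.coeff w.deg) := by
        rw [map_div₀, eq_div_iff hd0]
        linear_combination h1
      rw [hweq, deg_algebraMap]
  have hcoeff_gt : ∀ j, w.deg < j → P₀.coeff j = 0 := by
    intro j hj
    have hinj : Function.Injective (algebraMap E (RatFunc K)) :=
      (algebraMap E (RatFunc K)).injective
    apply hinj
    rw [hcoeff j, map_zero, Polynomial.coeff_eq_zero_of_natDegree_lt,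
      Polynomial.coeff_eq_zero_of_natDegree_lt]
    · simp
    · have : w.denom.natDegree ≤ w.deg := le_max_right _ _
      omega
    · have : w.num.natDegree ≤ w.deg := le_max_left _ _
      omega
  have hP₀ne : P₀ ≠ 0 := fun h => hlead (by rw [h]; simp)
  have hdegP₀ : P₀.natDegree = w.deg := by
    have h1 : P₀.natDegree ≤ w.deg := Polynomial.natDegree_le_iff_coeff_eq_zero.mpr hcoeff_gt
    have h2 : w.deg ≤ P₀.natDegree := Polynomial.le_natDegree_of_ne_zero hlead
    omega
  have haeval : aeval (RatFunc.X : RatFunc K) P₀ = 0 := by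
    rw [hP₀, map_sub, map_mul, Polynomial.aeval_C, Polynomial.aeval_map_algebraMap,
      Polynomial.aeval_map_algebraMap, ← algMap_eq_aeval, ← algMap_eq_aeval, halgw]
    have hnum : algebraMap K[X] (RatFunc K) w.num = w * algebraMap K[X] (RatFunc K) w.denom := by
      rw [← div_eq_iff (RatFunc.algebraMap_ne_zero (RatFunc.denom_ne_zero w))]
      exact RatFunc.num_div_denom w
    rw [hnum, sub_self]
  refine ⟨P₀ * Polynomial.C (P₀.leadingCoeff)⁻¹, Polynomial.monic_mul_leadingCoeff_inv hP₀ne, ?_, ?_⟩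
  · rw [Polynomial.natDegree_mul_C, hdegP₀]
    exact inv_ne_zero (Polynomial.leadingCoeff_ne_zero.mpr hP₀ne)
  · rw [map_mul, haeval, zero_mul]

lemma isIntegral_X {w : RatFunc K} (hw : w.deg ≠ 0) (E : IntermediateField K (RatFunc K))
    (hwE : w ∈ E) : IsIntegral E (RatFunc.X : RatFunc K) := by
  obtain ⟨P, hm, _, h0⟩ := annihilator hw E hwE
  exact ⟨P, hm, by rwa [Polynomial.aeval_def] at h0⟩

lemma transcendental_of_deg_ne_zero {w : RatFunc K} (hw : w.deg ≠ 0) : Transcendental K w := by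
  by_contra halg
  rw [Transcendental, not_not] at halg
  have hint : IsIntegral K w := halg.isIntegral
  haveI : FiniteDimensional K K⟮w⟯ := IntermediateField.adjoin.finiteDimensional hint
  have hXint : IsIntegral K⟮w⟯ (RatFunc.X : RatFunc K) :=
    isIntegral_X hw K⟮w⟯ (IntermediateField.mem_adjoin_simple_self K w)
  haveI : FiniteDimensional K⟮w⟯ K⟮w⟯⟮(RatFunc.X : RatFunc K)⟯ :=
    IntermediateField.adjoin.finiteDimensional hXint
  haveI : FiniteDimensional K K⟮w⟯⟮(RatFunc.X : RatFunc K)⟯ :=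
    FiniteDimensional.trans K K⟮w⟯ _
  set ξ : K⟮w⟯⟮(RatFunc.X : RatFunc K)⟯ :=
    ⟨RatFunc.X, IntermediateField.mem_adjoin_simple_self _ _⟩ with hξ
  have h2 : IsIntegral K ξ := IsIntegral.of_finite K ξ
  have h3 : IsIntegral K (RatFunc.X : RatFunc K) := by
    have := h2.map ((IntermediateField.val _).restrictScalars K)
    simpa using this
  exact transcendental_X h3.isAlgebraic

lemma adjoin_X_top (E : IntermediateField K (RatFunc K)) :
    IntermediateField.adjoin E {(RatFunc.X : RatFunc K)} = ⊤ := by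
  have htop : (IntermediateField.adjoin E {(RatFunc.X : RatFunc K)}).toSubfield = ⊤ := by
    apply subfield_eq_top
    · intro c
      rw [IsScalarTower.algebraMap_apply K E (RatFunc K)]
      exact (IntermediateField.adjoin E _).algebraMap_mem _
    · exact IntermediateField.mem_adjoin_simple_self _ _
  rw [eq_top_iff]
  intro x _
  have : x ∈ (IntermediateField.adjoin E {(RatFunc.X : RatFunc K)}).toSubfield := by
    rw [htop]; trivial
  exact this

lemma finiteDimensional_and_finrank {w : RatFunc K} (hw : w.deg ≠ 0)
    (E : IntermediateField K (RatFunc K)) (hwE : w ∈ E) :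
    FiniteDimensional E (RatFunc K) ∧
      Module.finrank E (RatFunc K) = (minpoly E (RatFunc.X : RatFunc K)).natDegree ∧
      (minpoly E (RatFunc.X : RatFunc K)).natDegree ≤ w.deg := by
  have hXint := isIntegral_X hw E hwE
  haveI hFD : FiniteDimensional E E⟮(RatFunc.X : RatFunc K)⟯ :=
    IntermediateField.adjoin.finiteDimensional hXint
  have htop := adjoin_X_top E
  have hequiv : E⟮(RatFunc.X : RatFunc K)⟯ ≃ₐ[E] RatFunc K := by
    rw [htop]; exact IntermediateField.topEquiv
  haveI : FiniteDimensional E (RatFunc K) :=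
    LinearEquiv.finiteDimensional hequiv.toLinearEquiv
  refine ⟨inferInstance, ?_, ?_⟩
  · rw [← IntermediateField.adjoin.finrank hXint]
    exact (LinearEquiv.finrank_eq hequiv.toLinearEquiv).symm
  · obtain ⟨P, hm, hdeg, h0⟩ := annihilator hw E hwE
    have := minpoly.min E (RatFunc.X : RatFunc K) hm h0
    calc (minpoly E (RatFunc.X : RatFunc K)).natDegree ≤ P.natDegree :=
          Polynomial.natDegree_le_natDegree this
      _ = w.deg := hdeg



lemma deg_zero : (0 : RatFunc K).deg = 0 := by
  rw [RatFunc.deg, RatFunc.num_zero, RatFunc.denom_zero]; simp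

noncomputable def compHom (w : RatFunc K) (hw : Transcendental K w) :
    RatFunc K →ₐ[K] RatFunc K :=
  RatFunc.liftAlgHom (Polynomial.aeval w)
    (nonZeroDivisors_le_comap_nonZeroDivisors_of_injective _ (transcendental_iff_injective.mp hw))

lemma compHom_apply (w : RatFunc K) (hw : Transcendental K w) (r : RatFunc K) :
    compHom w hw r = r.comp w := by
  conv_lhs => rw [← RatFunc.num_div_denom r]
  rw [compHom, RatFunc.liftAlgHom_apply_div]
  rfl

lemma compHom_X (w : RatFunc K) (hw : Transcendental K w) :
    compHom w hw RatFunc.X = w := by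
  rw [compHom_apply, RatFunc.comp, RatFunc.num_X, RatFunc.denom_X]
  simp

lemma fix_of_fix_gen {w : RatFunc K} {hw : Transcendental K w}
    (ψ : RatFunc K →ₐ[K] RatFunc K) (hψ : ψ w = w) :
    ∀ y ∈ (compHom w hw).fieldRange, ψ y = y := by
  rintro y ⟨g, rfl⟩
  show ψ (compHom w hw g) = compHom w hw g
  rw [compHom_apply, RatFunc.comp, map_div₀, ← Polynomial.aeval_algHom_apply,
    ← Polynomial.aeval_algHom_apply, hψ]

/-- If `C x * h.num + C y * h.denom = 0` with not both `x y` zero and `h` nonconstant, False. -/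
lemma no_lin_rel {h : RatFunc K} (hh : h.deg ≠ 0) {x y : K} (hxy : ¬(x = 0 ∧ y = 0))
    (heq : Polynomial.C x * h.num + Polynomial.C y * h.denom = 0) : False := by
  by_cases hx : x = 0
  · subst hx
    simp only [map_zero, zero_mul, zero_add] at heq
    rcases mul_eq_zero.mp heq with h1 | h1
    · exact hxy ⟨rfl, by simpa using h1⟩
    · exact RatFunc.denom_ne_zero h h1
  · have hdvd : h.denom ∣ Polynomial.C x * h.num := by
      refine ⟨-(Polynomial.C y), ?_⟩
      linear_combination heq
    have hcop : IsCoprime h.num h.denom := RatFunc.isCoprime_num_denom h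
    have hdvd2 : h.denom ∣ Polynomial.C x :=
      hcop.symm.dvd_of_dvd_mul_right hdvd
    have hdm : h.denom.natDegree = 0 := by
      have := Polynomial.natDegree_le_of_dvd hdvd2 (by simpa using hx)
      simpa using this
    have hdn : h.num.natDegree = 0 := by
      have hle : h.num.natDegree ≤ 0 := by
        have h2 : Polynomial.C x * h.num = -(Polynomial.C y) * h.denom := by
          linear_combination heq
        have : (Polynomial.C x * h.num).natDegree ≤ (-(Polynomial.C y) * h.denom).natDegree := by
          rw [h2]
        calc h.num.natDegree = (Polynomial.C x * h.num).natDegree := by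
              rw [Polynomial.natDegree_C_mul hx]
          _ ≤ (-(Polynomial.C y) * h.denom).natDegree := this
          _ ≤ (-(Polynomial.C y)).natDegree + h.denom.natDegree := Polynomial.natDegree_mul_le
          _ ≤ 0 := by simp [hdm]
      omega
    apply hh
    rw [RatFunc.deg, hdn, hdm]
    simp

lemma deg_comp_of_deg_eq_one {g h : RatFunc K} (hg : g.deg = 1) (hh : h.deg ≠ 0) :
    (g.comp h).deg = h.deg := by
  have hg0 : g ≠ 0 := by rintro rfl; rw [deg_zero] at hg; omega
  set a := g.num.coeff 1 with ha'
  set b := g.num.coeff 0 with hb'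
  set c := g.denom.coeff 1 with hc'
  set d := g.denom.coeff 0 with hd'
  have hgnum : g.num = Polynomial.C a * Polynomial.X + Polynomial.C b :=
    Polynomial.eq_X_add_C_of_natDegree_le_one (le_trans (le_max_left _ _) hg.le)
  have hgden : g.denom = Polynomial.C c * Polynomial.X + Polynomial.C d :=
    Polynomial.eq_X_add_C_of_natDegree_le_one (le_trans (le_max_right _ _) hg.le)
  -- determinant nonzero
  have hdet : a * d - b * c ≠ 0 := by
    intro h0
    have h2 : Polynomial.C a * g.denom - Polynomial.C c * g.num = Polynomial.C (a * d - b * c) := by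
      rw [hgnum, hgden, map_sub, map_mul, map_mul]
      ring
    rw [h0, map_zero] at h2
    by_cases hA : a = 0
    · have hc0 : c = 0 := by
        rw [hA, map_zero, zero_mul, zero_sub, neg_eq_zero, mul_eq_zero] at h2
        rcases h2 with h2 | h2
        · simpa using h2
        · exact absurd h2 (RatFunc.num_ne_zero hg0)
      rw [RatFunc.deg, hgnum, hgden, hA, hc0] at hg
      simp at hg
    · have hdvd : g.num ∣ g.denom := by
        have : g.num ∣ Polynomial.C a * g.denom := ⟨Polynomial.C c, by linear_combination h2⟩
        have h3 : IsUnit (Polynomial.C a) := Polynomial.isUnit_C.mpr (Ne.isUnit hA)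
        exact (IsUnit.dvd_mul_left h3).mp this
      have := (RatFunc.isCoprime_num_denom g).isUnit_of_dvd' (dvd_refl _) hdvd
      have hdeg0 := Polynomial.natDegree_eq_zero_of_isUnit this
      apply hA
      rw [ha']
      exact Polynomial.coeff_eq_zero_of_natDegree_lt (by omega)
  set A := Polynomial.C a * h.num + Polynomial.C b * h.denom with hA'
  set B := Polynomial.C c * h.num + Polynomial.C d * h.denom with hB'
  have hnum0 : ¬(a = 0 ∧ b = 0) := by
    rintro ⟨ha0, hb0⟩
    apply RatFunc.num_ne_zero hg0
    rw [hgnum, ha0, hb0]; simp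
  have hden0 : ¬(c = 0 ∧ d = 0) := by
    rintro ⟨hc0, hd0⟩
    apply RatFunc.denom_ne_zero g
    rw [hgden, hc0, hd0]; simp
  have hAne : A ≠ 0 := fun h0 => no_lin_rel hh hnum0 h0
  have hBne : B ≠ 0 := fun h0 => no_lin_rel hh hden0 h0
  have h3 : Polynomial.C d * A - Polynomial.C b * B = Polynomial.C (a*d - b*c) * h.num := by
    rw [hA', hB', map_sub, map_mul, map_mul]
    ring
  have h4 : Polynomial.C a * B - Polynomial.C c * A = Polynomial.C (a*d - b*c) * h.denom := by
    rw [hA', hB', map_sub, map_mul, map_mul]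
    ring
  have h5 : Polynomial.C (a*d - b*c)⁻¹ * Polynomial.C (a*d - b*c) = (1 : K[X]) := by
    rw [← map_mul, inv_mul_cancel₀ hdet, map_one]
  have hm' : algebraMap K[X] (RatFunc K) h.denom ≠ 0 :=
    RatFunc.algebraMap_ne_zero (RatFunc.denom_ne_zero h)
  have hnm : h * algebraMap K[X] (RatFunc K) h.denom = algebraMap K[X] (RatFunc K) h.num := by
    nth_rewrite 1 [← RatFunc.num_div_denom h]
    rw [div_mul_cancel₀ _ hm']
  have hX : ∀ p q : K, Polynomial.aeval h (Polynomial.C p * Polynomial.X + Polynomial.C q) =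
      (algebraMap K[X] (RatFunc K) (Polynomial.C p * h.num + Polynomial.C q * h.denom)) /
        algebraMap K[X] (RatFunc K) h.denom := by
    intro p q
    have hC : ∀ r : K, algebraMap K[X] (RatFunc K) (Polynomial.C r) =
        algebraMap K (RatFunc K) r := fun r => by
      rw [IsScalarTower.algebraMap_apply K K[X] (RatFunc K), Polynomial.algebraMap_eq]
    rw [map_add, map_mul, Polynomial.aeval_C, Polynomial.aeval_C, Polynomial.aeval_X,
      map_add, map_mul, map_mul, hC, hC, eq_div_iff hm']
    linear_combination algebraMap K (RatFunc K) p * hnm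
  have hABr : g.comp h = algebraMap K[X] (RatFunc K) A / algebraMap K[X] (RatFunc K) B := by
    rw [RatFunc.comp]
    conv_lhs => rw [hgnum, hgden]
    rw [hX, hX, ← hA', ← hB', div_div_div_cancel_right₀]
    exact hm'
  set r := g.comp h with hr
  have hrne : r ≠ 0 := by
    rw [hABr]
    exact div_ne_zero (RatFunc.algebraMap_ne_zero hAne) (RatFunc.algebraMap_ne_zero hBne)
  have h6 : algebraMap K[X] (RatFunc K) r.num / algebraMap K[X] (RatFunc K) r.denom =
      algebraMap K[X] (RatFunc K) A / algebraMap K[X] (RatFunc K) B :=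
    (RatFunc.num_div_denom r).trans hABr
  rw [div_eq_div_iff (RatFunc.algebraMap_ne_zero (RatFunc.denom_ne_zero r))
    (RatFunc.algebraMap_ne_zero hBne), ← map_mul, ← map_mul] at h6
  have hcross : r.num * B = A * r.denom := RatFunc.algebraMap_injective K h6
  have hc_r : IsCoprime r.num r.denom := RatFunc.isCoprime_num_denom r
  obtain ⟨u, v, huv⟩ := RatFunc.isCoprime_num_denom h
  have hABcop : IsCoprime A B := by
    refine ⟨Polynomial.C (a*d-b*c)⁻¹ * (u * Polynomial.C d - v * Polynomial.C c),
           Polynomial.C (a*d-b*c)⁻¹ * (v * Polynomial.C a - u * Polynomial.C b), ?_⟩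
    linear_combination (Polynomial.C (a*d-b*c)⁻¹ * u) * h3 +
      (Polynomial.C (a*d-b*c)⁻¹ * v) * h4 + (u * h.num + v * h.denom) * h5 + huv
  have hrnum0 : r.num ≠ 0 := RatFunc.num_ne_zero hrne
  have hnumdeg : r.num.natDegree = A.natDegree := by
    have d1 : r.num ∣ A := hc_r.dvd_of_dvd_mul_right ⟨B, hcross.symm⟩
    have d2 : A ∣ r.num := hABcop.dvd_of_dvd_mul_right ⟨r.denom, by linear_combination hcross⟩
    exact le_antisymm (Polynomial.natDegree_le_of_dvd d1 hAne)
      (Polynomial.natDegree_le_of_dvd d2 hrnum0)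
  have hdendeg : r.denom.natDegree = B.natDegree := by
    have d1 : r.denom ∣ B := hc_r.symm.dvd_of_dvd_mul_right ⟨A, by linear_combination hcross⟩
    have d2 : B ∣ r.denom := hABcop.symm.dvd_of_dvd_mul_right ⟨r.num, by linear_combination -hcross⟩
    exact le_antisymm (Polynomial.natDegree_le_of_dvd d1 hBne)
      (Polynomial.natDegree_le_of_dvd d2 (RatFunc.denom_ne_zero r))
  have hABdeg : max A.natDegree B.natDegree = h.deg := by
    apply le_antisymm
    · apply max_le
      · calc A.natDegree ≤ max (Polynomial.C a * h.num).natDegree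
              (Polynomial.C b * h.denom).natDegree := Polynomial.natDegree_add_le _ _
          _ ≤ max h.num.natDegree h.denom.natDegree :=
              max_le_max (Polynomial.natDegree_C_mul_le _ _) (Polynomial.natDegree_C_mul_le _ _)
          _ = h.deg := rfl
      · calc B.natDegree ≤ max (Polynomial.C c * h.num).natDegree
              (Polynomial.C d * h.denom).natDegree := Polynomial.natDegree_add_le _ _
          _ ≤ max h.num.natDegree h.denom.natDegree :=
              max_le_max (Polynomial.natDegree_C_mul_le _ _) (Polynomial.natDegree_C_mul_le _ _)
          _ = h.deg := rfl
    · have h3' : h.num = Polynomial.C (a*d-b*c)⁻¹ * (Polynomial.C d * A - Polynomial.C b * B) := by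
        linear_combination (-(Polynomial.C (a*d-b*c)⁻¹)) * h3 - h.num * h5
      have h4' : h.denom =
          Polynomial.C (a*d-b*c)⁻¹ * (Polynomial.C a * B - Polynomial.C c * A) := by
        linear_combination (-(Polynomial.C (a*d-b*c)⁻¹)) * h4 - h.denom * h5
      have hn_le : h.num.natDegree ≤ max A.natDegree B.natDegree := by
        calc h.num.natDegree
            = (Polynomial.C (a*d-b*c)⁻¹ * (Polynomial.C d * A - Polynomial.C b * B)).natDegree := by
              rw [← h3']
          _ ≤ (Polynomial.C d * A - Polynomial.C b * B).natDegree :=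
              Polynomial.natDegree_C_mul_le _ _
          _ ≤ max (Polynomial.C d * A).natDegree (Polynomial.C b * B).natDegree :=
              Polynomial.natDegree_sub_le _ _
          _ ≤ max A.natDegree B.natDegree :=
              max_le_max (Polynomial.natDegree_C_mul_le _ _) (Polynomial.natDegree_C_mul_le _ _)
      have hm_le : h.denom.natDegree ≤ max A.natDegree B.natDegree := by
        calc h.denom.natDegree
            = (Polynomial.C (a*d-b*c)⁻¹ * (Polynomial.C a * B - Polynomial.C c * A)).natDegree := by
              rw [← h4']
          _ ≤ (Polynomial.C a * B - Polynomial.C c * A).natDegree :=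
              Polynomial.natDegree_C_mul_le _ _
          _ ≤ max (Polynomial.C a * B).natDegree (Polynomial.C c * A).natDegree :=
              Polynomial.natDegree_sub_le _ _
          _ ≤ max B.natDegree A.natDegree :=
              max_le_max (Polynomial.natDegree_C_mul_le _ _) (Polynomial.natDegree_C_mul_le _ _)
          _ = max A.natDegree B.natDegree := max_comm _ _
      exact max_le hn_le hm_le
  calc r.deg = max A.natDegree B.natDegree := by rw [RatFunc.deg, hnumdeg, hdendeg]
    _ = h.deg := hABdeg




lemma coeff_prod_common_denom (N : ℕ) (u : ℕ → RatFunc K) (hl : ∀ i, i < N → (u i).deg ≤ 1) :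
    ∃ D : K[X], D ≠ 0 ∧ D.natDegree ≤ N ∧ ∀ j : ℕ, ∃ c : K[X], c.natDegree ≤ N ∧
      (∏ i ∈ Finset.range N, (Polynomial.X - Polynomial.C (u i))).coeff j =
        algebraMap K[X] (RatFunc K) c / algebraMap K[X] (RatFunc K) D := by
  induction N with
  | zero =>
      refine ⟨1, one_ne_zero, by simp, fun j => ?_⟩
      rcases Nat.eq_zero_or_pos j with rfl | hj
      · exact ⟨1, by simp, by simp⟩
      · refine ⟨0, by simp, ?_⟩
        simp [Polynomial.coeff_one, Nat.pos_iff_ne_zero.mp hj]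
  | succ N ih =>
      obtain ⟨D, hD0, hDdeg, hc⟩ := ih (fun i hi => hl i (by omega))
      have hv := hl N (by omega)
      have hvnum : (u N).num.natDegree ≤ 1 := le_trans (le_max_left _ _) hv
      have hvden : (u N).denom.natDegree ≤ 1 := le_trans (le_max_right _ _) hv
      have hm' : algebraMap K[X] (RatFunc K) (u N).denom ≠ 0 :=
        RatFunc.algebraMap_ne_zero (RatFunc.denom_ne_zero _)
      have hD' : algebraMap K[X] (RatFunc K) D ≠ 0 := RatFunc.algebraMap_ne_zero hD0
      have hnm : (u N) * algebraMap K[X] (RatFunc K) (u N).denom =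
          algebraMap K[X] (RatFunc K) (u N).num := by
        nth_rewrite 1 [← RatFunc.num_div_denom (u N)]
        rw [div_mul_cancel₀ _ hm']
      refine ⟨D * (u N).denom, mul_ne_zero hD0 (RatFunc.denom_ne_zero _), ?_, fun j => ?_⟩
      · calc (D * (u N).denom).natDegree ≤ D.natDegree + (u N).denom.natDegree :=
            Polynomial.natDegree_mul_le
          _ ≤ N + 1 := by omega
      · rw [Finset.prod_range_succ]
        cases j with
        | zero =>
            obtain ⟨c0, hc0deg, hc0⟩ := hc 0
            refine ⟨-(c0 * (u N).num), ?_, ?_⟩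
            · calc (-(c0 * (u N).num)).natDegree = (c0 * (u N).num).natDegree :=
                  Polynomial.natDegree_neg _
                _ ≤ c0.natDegree + (u N).num.natDegree := Polynomial.natDegree_mul_le
                _ ≤ N + 1 := by omega
            · rw [Polynomial.mul_coeff_zero, Polynomial.coeff_sub, Polynomial.coeff_X_zero,
                Polynomial.coeff_C_zero, hc0, map_neg, map_mul, map_mul,
                div_mul_eq_mul_div, div_eq_div_iff hD' (mul_ne_zero hD' hm')]
              linear_combination (-(algebraMap K[X] (RatFunc K) c0 *
                algebraMap K[X] (RatFunc K) D)) * hnm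
        | succ k =>
            obtain ⟨c1, hc1deg, hc1⟩ := hc k
            obtain ⟨c2, hc2deg, hc2⟩ := hc (k + 1)
            refine ⟨c1 * (u N).denom - c2 * (u N).num, ?_, ?_⟩
            · calc (c1 * (u N).denom - c2 * (u N).num).natDegree ≤
                    max (c1 * (u N).denom).natDegree (c2 * (u N).num).natDegree :=
                  Polynomial.natDegree_sub_le _ _
                _ ≤ N + 1 := by
                    apply max_le
                    · calc (c1 * (u N).denom).natDegree ≤
                          c1.natDegree + (u N).denom.natDegree := Polynomial.natDegree_mul_le
                        _ ≤ N + 1 := by omega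
                    · calc (c2 * (u N).num).natDegree ≤
                          c2.natDegree + (u N).num.natDegree := Polynomial.natDegree_mul_le
                        _ ≤ N + 1 := by omega
            · rw [mul_comm (∏ i ∈ Finset.range N, (Polynomial.X - Polynomial.C (u i)))
                  (Polynomial.X - Polynomial.C (u N)), sub_mul, Polynomial.coeff_sub,
                Polynomial.coeff_X_mul, Polynomial.coeff_C_mul, hc1, hc2, map_sub, map_mul,
                map_mul, map_mul, ← mul_div_assoc, div_sub_div_same,
                div_eq_div_iff hD' (mul_ne_zero hD' hm')]
              linear_combination (-(algebraMap K[X] (RatFunc K) c2 *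
                algebraMap K[X] (RatFunc K) D)) * hnm


lemma roots_lower_bound (E : IntermediateField K (RatFunc K)) (p : ℕ)
    (ψ : ℕ → (RatFunc K →ₐ[K] RatFunc K))
    (hfix : ∀ i, ∀ y ∈ E, ψ i y = y)
    (hinj : ∀ i j, i < p → j < p → ψ i RatFunc.X = ψ j RatFunc.X → i = j)
    (hXint : IsIntegral E (RatFunc.X : RatFunc K)) :
    p ≤ (minpoly E (RatFunc.X : RatFunc K)).natDegree := by
  classical
  set m := minpoly E (RatFunc.X : RatFunc K) with hm
  set M := m.map (algebraMap E (RatFunc K)) with hM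
  have hmono : m.Monic := minpoly.monic hXint
  have hMne : M ≠ 0 := (hmono.map _).ne_zero
  have hMdeg : M.natDegree = m.natDegree := hmono.natDegree_map _
  have hMeval : M.eval RatFunc.X = 0 := by
    rw [hM, Polynomial.eval_map, ← Polynomial.aeval_def, minpoly.aeval]
  have hMfix : ∀ i, M.map ((ψ i).toRingHom) = M := by
    intro i
    rw [hM, Polynomial.map_map]
    congr 1
    ext x
    exact hfix i (algebraMap E (RatFunc K) x)
      (by rw [IntermediateField.algebraMap_apply]; exact x.2)
  have hroot : ∀ i, M.eval (ψ i RatFunc.X) = 0 := by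
    intro i
    calc M.eval (ψ i RatFunc.X) = (M.map ((ψ i).toRingHom)).eval (ψ i RatFunc.X) := by
          rw [hMfix i]
      _ = (ψ i) (M.eval RatFunc.X) := by
          rw [Polynomial.eval_map]
          exact Polynomial.eval₂_hom _ _
      _ = 0 := by rw [hMeval, map_zero]
  have hsub : (Finset.range p).image (fun i => ψ i RatFunc.X) ⊆ M.roots.toFinset := by
    intro x hx
    obtain ⟨i, _, rfl⟩ := Finset.mem_image.mp hx
    rw [Multiset.mem_toFinset, Polynomial.mem_roots hMne]
    exact hroot i
  calc p = ((Finset.range p).image (fun i => ψ i RatFunc.X)).card := by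
        rw [Finset.card_image_of_injOn fun i hi j hj hij =>
          hinj i j (Finset.mem_range.mp hi) (Finset.mem_range.mp hj) hij, Finset.card_range]
    _ ≤ M.roots.toFinset.card := Finset.card_le_card hsub
    _ ≤ Multiset.card M.roots := Multiset.toFinset_card_le _
    _ ≤ M.natDegree := Polynomial.card_roots' M
    _ = m.natDegree := hMdeg

end FixAux

set_option maxHeartbeats 1000000 in
/-- The fixing group of an indecomposable rational function of composite degree is
trivial. -/
theorem fixingGroup_of_indecomposable_composite_degree {K : Type*} [Field K]
    (f : RatFunc K) (a b : ℕ) (ha : 2 ≤ a) (hb : 2 ≤ b) (hdeg : f.deg = a * b)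
    (hind : ∀ g h : RatFunc K, f = g.comp h → g.deg = 1 ∨ h.deg = 1) :
    MulAction.stabilizer (RatFunc K ≃ₐ[K] RatFunc K) f = ⊥ := by
  classical
  rw [eq_bot_iff]
  intro σ hσmem
  rw [Subgroup.mem_bot]
  by_contra hσ1
  rw [MulAction.mem_stabilizer_iff, AlgEquiv.smul_def] at hσmem
  have hσf : σ f = f := hσmem
  have hab4 : 4 ≤ a * b := le_trans (by norm_num) (Nat.mul_le_mul ha hb)
  have hab1 : f.deg ≠ 1 := by omega
  have hfdeg0 : f.deg ≠ 0 := by omega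
  have htransf := FixAux.transcendental_of_deg_ne_zero hfdeg0
  set E0 := (FixAux.compHom f htransf).fieldRange with hE0
  have hfE0 : f ∈ E0 := ⟨RatFunc.X, FixAux.compHom_X f htransf⟩
  obtain ⟨hFD0, -, -⟩ := FixAux.finiteDimensional_and_finrank hfdeg0 E0 hfE0
  haveI := hFD0
  have hcomm : ∀ y : E0, (σ : RatFunc K ≃+* RatFunc K) (algebraMap E0 (RatFunc K) y) =
      algebraMap E0 (RatFunc K) y := by
    intro y
    exact FixAux.fix_of_fix_gen (σ : RatFunc K →ₐ[K] RatFunc K) hσf y.1 y.2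
  set τ : RatFunc K ≃ₐ[E0] RatFunc K := AlgEquiv.ofRingEquiv hcomm with hτ
  haveI : Fintype (RatFunc K ≃ₐ[E0] RatFunc K) := AlgEquiv.fintype E0 (RatFunc K)
  set n := orderOf τ with hn
  have hn1 : n ≠ 1 := by
    intro h1
    apply hσ1
    have hτ1 : τ = 1 := orderOf_eq_one_iff.mp h1
    apply AlgEquiv.ext
    intro y
    have h2 : τ y = y := by rw [hτ1]; rfl
    exact h2
  have hn0 : n ≠ 0 := (orderOf_pos τ).ne'
  set p := n.minFac with hp'
  have hp : Nat.Prime p := Nat.minFac_prime hn1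
  have hpn : p ∣ n := Nat.minFac_dvd n
  set ρ := τ ^ (n / p) with hρ
  have hnp0 : n / p ≠ 0 := by
    intro h0
    have h2 : n / p * p = n := Nat.div_mul_cancel hpn
    rw [h0, zero_mul] at h2
    exact hn0 h2.symm
  have hord : orderOf ρ = p := by
    rw [hρ, orderOf_pow' τ hnp0, ← hn, Nat.gcd_eq_right (Nat.div_dvd_of_dvd hpn),
      Nat.div_div_self hpn hn0]
  set ψ : ℕ → (RatFunc K →ₐ[K] RatFunc K) :=
    fun i => AlgHom.restrictScalars K ((ρ ^ i : RatFunc K ≃ₐ[E0] RatFunc K) :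
      RatFunc K →ₐ[E0] RatFunc K) with hψ
  have hψf : ∀ i, ψ i f = f := by
    intro i
    have h2 : (ρ ^ i) (algebraMap E0 (RatFunc K) ⟨f, hfE0⟩) =
        algebraMap E0 (RatFunc K) ⟨f, hfE0⟩ := AlgEquiv.commutes _ _
    exact h2
  set vv : ℕ → RatFunc K := fun i => ψ i RatFunc.X with hvv
  have hvv0 : vv 0 = RatFunc.X := by
    show (ρ ^ 0) RatFunc.X = RatFunc.X
    rw [pow_zero]
    rfl
  have hvv_succ : ∀ i, ψ 1 (vv i) = vv (i + 1) := by
    intro i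
    show (ρ ^ 1) ((ρ ^ i) RatFunc.X) = (ρ ^ (i + 1)) RatFunc.X
    rw [pow_one, pow_succ']
    rfl
  have hψ_succ : ∀ i y, ψ (i + 1) y = ψ 1 (ψ i y) := by
    intro i y
    show (ρ ^ (i + 1)) y = (ρ ^ 1) ((ρ ^ i) y)
    rw [pow_one, pow_succ']
    rfl
  have hvv_per : vv p = vv 0 := by
    show (ρ ^ p) RatFunc.X = (ρ ^ 0) RatFunc.X
    rw [← hord, pow_orderOf_eq_one, pow_zero]
  have hdeg_vv : ∀ i, (vv i).deg = 1 := by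
    intro i
    have h1 : f = RatFunc.comp f (vv i) := by
      conv_lhs => rw [← hψf i]
      exact FixAux.algHom_apply_eq_comp (ψ i) f
    rcases hind f (vv i) h1 with h2 | h2
    · exact absurd h2 hab1
    · exact h2
  set Θ : Polynomial (RatFunc K) :=
    ∏ i ∈ Finset.range p, (Polynomial.X - Polynomial.C (vv i)) with hΘ
  have hΘmonic : Θ.Monic :=
    Polynomial.monic_prod_of_monic _ _ fun i _ => Polynomial.monic_X_sub_C _
  have hΘmap : Θ.map ((ψ 1).toRingHom) = Θ := by
    rw [hΘ, Polynomial.map_prod]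
    have h2 : ∀ i ∈ Finset.range p,
        (Polynomial.X - Polynomial.C (vv i)).map ((ψ 1).toRingHom) =
        Polynomial.X - Polynomial.C (vv (i + 1)) := by
      intro i _
      rw [Polynomial.map_sub, Polynomial.map_X, Polynomial.map_C]
      congr 1
      exact congrArg _ (hvv_succ i)
    rw [Finset.prod_congr rfl h2]
    have hg0ne : (Polynomial.X - Polynomial.C (vv 0)) ≠ 0 :=
      (Polynomial.monic_X_sub_C _).ne_zero
    apply mul_right_cancel₀ hg0ne
    calc (∏ i ∈ Finset.range p, (Polynomial.X - Polynomial.C (vv (i + 1)))) *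
          (Polynomial.X - Polynomial.C (vv 0))
        = ∏ i ∈ Finset.range (p + 1), (Polynomial.X - Polynomial.C (vv i)) :=
          (Finset.prod_range_succ' (fun i => Polynomial.X - Polynomial.C (vv i)) p).symm
      _ = (∏ i ∈ Finset.range p, (Polynomial.X - Polynomial.C (vv i))) *
          (Polynomial.X - Polynomial.C (vv p)) := Finset.prod_range_succ _ p
      _ = _ := by rw [hvv_per]
  have hcoeff_fix1 : ∀ j, ψ 1 (Θ.coeff j) = Θ.coeff j := by
    intro j
    have h2 := Polynomial.coeff_map ((ψ 1).toRingHom) j (p := Θ)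
    rw [hΘmap] at h2
    exact h2.symm
  have hcoeff_fix : ∀ i j, ψ i (Θ.coeff j) = Θ.coeff j := by
    intro i
    induction i with
    | zero =>
        intro j
        show (ρ ^ 0) _ = _
        rw [pow_zero]
        rfl
    | succ i ih =>
        intro j
        rw [hψ_succ, ih j, hcoeff_fix1 j]
  have hΘne : Θ ≠ 0 := hΘmonic.ne_zero
  have hΘdeg : Θ.natDegree = p := by
    rw [hΘ, Polynomial.natDegree_prod _ _ fun i _ => (Polynomial.monic_X_sub_C _).ne_zero]
    simp [Polynomial.natDegree_X_sub_C]
  have hΘevalX : Θ.eval RatFunc.X = 0 := by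
    rw [hΘ, Polynomial.eval_prod]
    apply Finset.prod_eq_zero (Finset.mem_range.mpr hp.pos)
    rw [Polynomial.eval_sub, Polynomial.eval_X, Polynomial.eval_C, hvv0, sub_self]
  have hexist : ∃ j, Θ.coeff j ∉ Set.range (algebraMap K (RatFunc K)) := by
    by_contra hall
    push_neg at hall
    simp only [Set.mem_range] at hall
    choose c hc using hall
    have hPmap : (∑ j ∈ Finset.range (p + 1), Polynomial.monomial j (c j)).map
        (algebraMap K (RatFunc K)) = Θ := by
      rw [Polynomial.map_sum]
      conv_rhs => rw [Polynomial.as_sum_range' Θ (p + 1) (by omega)]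
      exact Finset.sum_congr rfl fun j _ => by rw [Polynomial.map_monomial, hc j]
    apply FixAux.transcendental_X (K := K)
    refine ⟨∑ j ∈ Finset.range (p + 1), Polynomial.monomial j (c j), ?_, ?_⟩
    · intro h0
      rw [h0, Polynomial.map_zero] at hPmap
      exact hΘne hPmap.symm
    · rw [Polynomial.aeval_def, ← Polynomial.eval_map, hPmap, hΘevalX]
  obtain ⟨j0, hj0⟩ := hexist
  set h := Θ.coeff j0 with hh
  have hdegh0 : h.deg ≠ 0 := FixAux.deg_ne_zero_of_notMem hj0
  have hfixh : ∀ i, ψ i h = h := fun i => hcoeff_fix i j0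
  have hdegh_le : h.deg ≤ p := by
    obtain ⟨D, hD0, hDdeg, hcd⟩ :=
      FixAux.coeff_prod_common_denom p vv fun i _ => (hdeg_vv i).le
    obtain ⟨c, hcdeg, hcval⟩ := hcd j0
    have h2 : h = algebraMap K[X] (RatFunc K) c / algebraMap K[X] (RatFunc K) D := by
      rw [hh, hΘ]
      exact hcval
    calc h.deg ≤ max c.natDegree D.natDegree := by
          rw [h2]; exact FixAux.deg_div_le c D hD0
      _ ≤ p := max_le hcdeg hDdeg
  have htransh := FixAux.transcendental_of_deg_ne_zero hdegh0
  set E := (FixAux.compHom h htransh).fieldRange with hE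
  have hhE : h ∈ E := ⟨RatFunc.X, FixAux.compHom_X h htransh⟩
  obtain ⟨hFDE, hfrE, hfr_le⟩ := FixAux.finiteDimensional_and_finrank hdegh0 E hhE
  haveI := hFDE
  have hfixE : ∀ i, ∀ y ∈ E, ψ i y = y := fun i => FixAux.fix_of_fix_gen (ψ i) (hfixh i)
  have hvv_inj : ∀ i j, i < p → j < p → vv i = vv j → i = j := by
    have key : ∀ i j, i < j → j < p → vv i ≠ vv j := by
      intro i j hij hj heq
      have h2 : (ρ ^ i) ((ρ ^ (j - i)) RatFunc.X) = (ρ ^ i) RatFunc.X := by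
        calc (ρ ^ i) ((ρ ^ (j - i)) RatFunc.X) = (ρ ^ (i + (j - i))) RatFunc.X := by
              rw [pow_add]; rfl
          _ = (ρ ^ j) RatFunc.X := by rw [Nat.add_sub_cancel' hij.le]
          _ = (ρ ^ i) RatFunc.X := heq.symm
      have h3 : (ρ ^ (j - i)) RatFunc.X = RatFunc.X := (ρ ^ i).injective h2
      have h4 : ψ (j - i) = ψ 0 := FixAux.algHom_ext (by
        show (ρ ^ (j - i)) RatFunc.X = (ρ ^ 0) RatFunc.X
        rw [h3, pow_zero]
        rfl)
      have h5 : ρ ^ (j - i) = 1 := by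
        apply AlgEquiv.ext
        intro y
        have h6 : (ρ ^ (j - i)) y = (ρ ^ 0) y := AlgHom.ext_iff.mp h4 y
        rw [pow_zero] at h6
        exact h6
      have h6 : p ∣ j - i := by
        rw [← hord]
        exact orderOf_dvd_of_pow_eq_one h5
      have h7 : 0 < j - i := by omega
      have := Nat.le_of_dvd h7 h6
      omega
    intro i j hi hj heq
    rcases lt_trichotomy i j with h' | h' | h'
    · exact absurd heq (key i j h' hj)
    · exact h'
    · exact absurd heq.symm (key j i h' hi)
  have hlow : p ≤ (minpoly E (RatFunc.X : RatFunc K)).natDegree :=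
    FixAux.roots_lower_bound E p ψ hfixE hvv_inj (FixAux.isIntegral_X hdegh0 E hhE)
  have hfr_eq : Module.finrank E (RatFunc K) = p := by omega
  have hdegh_eq : h.deg = p := by omega
  -- fixed field of ρ over E
  have hχcomm : ∀ y : E, (ψ 1) (algebraMap E (RatFunc K) y) = algebraMap E (RatFunc K) y :=
    fun y => hfixE 1 _ (by rw [IntermediateField.algebraMap_apply]; exact y.2)
  set χ : RatFunc K →ₐ[E] RatFunc K :=
    { toRingHom := (ψ 1).toRingHom, commutes' := hχcomm } with hχ
  set F : IntermediateField E (RatFunc K) :=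
    Subalgebra.toIntermediateField (AlgHom.equalizer χ (AlgHom.id E _)) (fun x hx => by
      show χ x⁻¹ = x⁻¹
      have hx' : χ x = x := hx
      rw [map_inv₀, hx']) with hF
  have hFmem : ∀ y : RatFunc K, y ∈ F ↔ ψ 1 y = y := fun y => Iff.rfl
  have hfF : f ∈ F := (hFmem f).mpr (hψf 1)
  set F' := IntermediateField.restrictScalars K F with hF'
  have hmemF' : ∀ y : RatFunc K, y ∈ F' ↔ y ∈ F := fun y => Iff.rfl
  have hfixF' : ∀ i, ∀ y ∈ F', ψ i y = y := by
    intro i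
    induction i with
    | zero =>
        intro y _
        show (ρ ^ 0) y = y
        rw [pow_zero]
        rfl
    | succ i ih =>
        intro y hy
        rw [hψ_succ, ih y hy]
        exact (hFmem y).mp ((hmemF' y).mp hy)
  have hhF' : h ∈ F' := (hmemF' h).mpr ((hFmem h).mpr (hfixh 1))
  obtain ⟨hFDF', hfrF', hfrF'_le⟩ := FixAux.finiteDimensional_and_finrank hdegh0 F' hhF'
  have hlowF' : p ≤ (minpoly F' (RatFunc.X : RatFunc K)).natDegree :=
    FixAux.roots_lower_bound F' p ψ hfixF' hvv_inj (FixAux.isIntegral_X hdegh0 F' hhF')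
  have hfinF' : p ≤ Module.finrank F' (RatFunc K) := by omega
  haveI : FiniteDimensional F' (RatFunc K) := hFDF'
  haveI hFDF : FiniteDimensional F (RatFunc K) := hFDF'
  have hfinF : p ≤ Module.finrank F (RatFunc K) := hfinF'
  have htower : Module.finrank E F * Module.finrank F (RatFunc K) =
      Module.finrank E (RatFunc K) := Module.finrank_mul_finrank E F (RatFunc K)
  have hq1 : Module.finrank E F = 1 := by
    have hpos : 0 < Module.finrank E F := Module.finrank_pos
    rw [hfr_eq] at htower
    have hq2pos : 0 < Module.finrank F (RatFunc K) := by omega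
    have hle : Module.finrank E F * Module.finrank F (RatFunc K) ≤
        1 * Module.finrank F (RatFunc K) := by
      rw [one_mul]
      omega
    have hle1 : Module.finrank E F ≤ 1 := Nat.le_of_mul_le_mul_right hle hq2pos
    omega
  have hFbot : F = ⊥ := IntermediateField.finrank_eq_one_iff.mp hq1
  have hfbot : f ∈ (⊥ : IntermediateField E (RatFunc K)) := hFbot ▸ hfF
  rw [IntermediateField.mem_bot] at hfbot
  obtain ⟨y, hy⟩ := hfbot
  have hfE : f ∈ E := by
    rw [← hy, IntermediateField.algebraMap_apply]
    exact y.2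
  rw [AlgHom.mem_fieldRange] at hfE
  obtain ⟨g, hg⟩ := hfE
  have hfgh : f = RatFunc.comp g h := by rw [← hg, FixAux.compHom_apply]
  rcases hind g h hfgh with h2 | h2
  · have h3 := FixAux.deg_comp_of_deg_eq_one h2 hdegh0
    rw [← hfgh] at h3
    rw [hdeg, hdegh_eq] at h3
    have hdvd : a ∣ p := ⟨b, by omega⟩
    rcases hp.eq_one_or_self_of_dvd a hdvd with h4 | h4
    · omega
    · rw [h4] at h3
      have h5 : p * b = p * 1 := by rw [mul_one]; exact h3
      have h6 : b = 1 := Nat.eq_of_mul_eq_mul_left hp.pos h5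
      omega
  · have := hp.two_le
    omega
end

section
/- Let K be a field, f ∈ K(x) in normal form of degree m ≥ 1, and let a, b, c, d ∈ K with ad − bc ≠ 0 define the unit u = (aX+b)/(cX+d) ∈ K(x). Assume f∘u = f. Then: (i) a ≠ 0 and d ≠ 0; (ii) f.num.eval(b/d) = 0; (iii) if c ≠ 0, then f.denom.eval(a/c) = 0. -/
open Polynomial

section Aux

variable {K : Type*} [Field K]

/-- The homogenized Möbius substitution of a polynomial. -/
noncomputable def mobiusPhi (a b c d : K) (r : K[X]) (k : ℕ) : K[X] :=
  ∑ i ∈ Finset.range (k + 1), C (r.coeff i) * (C a * X + C b) ^ i * (C c * X + C d) ^ (k - i)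

lemma natDegree_mobiusPhi_le (a b c d : K) (r : K[X]) (k : ℕ) :
    (mobiusPhi a b c d r k).natDegree ≤ k := by
  refine natDegree_sum_le_of_forall_le _ _ fun i hi => ?_
  have hik : i ≤ k := Nat.lt_succ_iff.mp (Finset.mem_range.mp hi)
  have h1 : ((C a * X + C b : K[X]) ^ i).natDegree ≤ i :=
    natDegree_pow_le.trans ((Nat.mul_le_mul_left i natDegree_linear_le).trans (by omega))
  have h2 : ((C c * X + C d : K[X]) ^ (k - i)).natDegree ≤ k - i :=
    natDegree_pow_le.trans ((Nat.mul_le_mul_left (k - i) natDegree_linear_le).trans (by omega))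
  calc (C (r.coeff i) * (C a * X + C b) ^ i * (C c * X + C d) ^ (k - i)).natDegree
      ≤ (C (r.coeff i) * (C a * X + C b) ^ i).natDegree
        + ((C c * X + C d : K[X]) ^ (k - i)).natDegree := natDegree_mul_le
    _ ≤ ((C (r.coeff i)).natDegree + ((C a * X + C b : K[X]) ^ i).natDegree) + (k - i) :=
        add_le_add natDegree_mul_le h2
    _ ≤ (0 + i) + (k - i) := by gcongr <;> simp [h1]
    _ ≤ k := by omega

lemma coeff_mobiusPhi (a b c d : K) (r : K[X]) (k : ℕ) :
    (mobiusPhi a b c d r k).coeff k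
      = ∑ i ∈ Finset.range (k + 1), r.coeff i * a ^ i * c ^ (k - i) := by
  rw [mobiusPhi, finset_sum_coeff]
  refine Finset.sum_congr rfl fun i hi => ?_
  have hik : i ≤ k := Nat.lt_succ_iff.mp (Finset.mem_range.mp hi)
  have hA : ((C a * X + C b : K[X]) ^ i).natDegree ≤ i :=
    natDegree_pow_le.trans ((Nat.mul_le_mul_left i natDegree_linear_le).trans (by omega))
  have h1 : (C (r.coeff i) * (C a * X + C b) ^ i).natDegree ≤ i :=
    natDegree_mul_le.trans (by simpa using hA)
  have h2 : ((C c * X + C d : K[X]) ^ (k - i)).natDegree ≤ k - i :=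
    natDegree_pow_le.trans ((Nat.mul_le_mul_left (k - i) natDegree_linear_le).trans (by omega))
  have h3 := coeff_mul_add_eq_of_natDegree_le h1 h2
  rw [Nat.add_sub_cancel' hik] at h3
  rw [h3, coeff_C_mul]
  have h4 : ((C a * X + C b : K[X]) ^ i).coeff i = a ^ i := by
    have := coeff_pow_of_natDegree_le (p := (C a * X + C b : K[X])) (n := 1) (m := i)
      natDegree_linear_le
    simpa using this
  have h5 : ((C c * X + C d : K[X]) ^ (k - i)).coeff (k - i) = c ^ (k - i) := by
    have := coeff_pow_of_natDegree_le (p := (C c * X + C d : K[X])) (n := 1) (m := k - i)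
      natDegree_linear_le
    simpa using this
  rw [h4, h5]

lemma eval_mobiusPhi (a b c d : K) (r : K[X]) (k : ℕ) (x : K) :
    (mobiusPhi a b c d r k).eval x
      = ∑ i ∈ Finset.range (k + 1), r.coeff i * (a * x + b) ^ i * (c * x + d) ^ (k - i) := by
  rw [mobiusPhi, eval_finset_sum]
  exact Finset.sum_congr rfl fun i hi => by simp

lemma sum_zero_pow_eq (g : ℕ → K) (k : ℕ) :
    ∑ i ∈ Finset.range (k + 1), g i * (0 : K) ^ (k - i) = g k := by
  rw [Finset.sum_range_succ, Finset.sum_eq_zero, Nat.sub_self, pow_zero, mul_one, zero_add]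
  intro i hi
  rw [zero_pow (by have := Finset.mem_range.mp hi; omega), mul_zero]

lemma sum_coeff_pow_eq (r : K[X]) {k : ℕ} (hk : r.natDegree ≤ k) (t s : K) (hs : s ≠ 0) :
    ∑ i ∈ Finset.range (k + 1), r.coeff i * t ^ i * s ^ (k - i) = s ^ k * r.eval (t / s) := by
  rw [eval_eq_sum_range' (Nat.lt_succ_of_le hk), Finset.mul_sum]
  refine Finset.sum_congr rfl fun i hi => ?_
  have hik : i ≤ k := Nat.lt_succ_iff.mp (Finset.mem_range.mp hi)
  have hsk : (s : K) ^ k = s ^ (k - i) * s ^ i := (pow_sub_mul_pow s hik).symm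
  rw [div_pow, hsk]
  field_simp

lemma aeval_mul_pow (a b c d : K) (hcd : (C c * X + C d : K[X]) ≠ 0)
    (r : K[X]) (k : ℕ) (hk : r.natDegree ≤ k) :
    Polynomial.aeval
        (algebraMap K[X] (RatFunc K) (C a * X + C b) / algebraMap K[X] (RatFunc K) (C c * X + C d))
        r * (algebraMap K[X] (RatFunc K) (C c * X + C d)) ^ k
      = algebraMap K[X] (RatFunc K) (mobiusPhi a b c d r k) := by
  set A := algebraMap K[X] (RatFunc K) (C a * X + C b) with hAdef
  set D := algebraMap K[X] (RatFunc K) (C c * X + C d) with hDdef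
  have hD : D ≠ 0 := RatFunc.algebraMap_ne_zero hcd
  rw [Polynomial.aeval_eq_sum_range' (Nat.lt_succ_of_le hk), mobiusPhi, map_sum,
    Finset.sum_mul]
  refine Finset.sum_congr rfl fun i hi => ?_
  have hik : i ≤ k := Nat.lt_succ_iff.mp (Finset.mem_range.mp hi)
  have hpow : (A / D) ^ i * D ^ k = A ^ i * D ^ (k - i) := by
    rw [div_pow, div_mul_eq_mul_div, eq_comm, eq_div_iff (pow_ne_zero i hD), mul_assoc,
      pow_sub_mul_pow D hik]
  rw [map_mul, map_mul, map_pow, map_pow, ← hAdef, ← hDdef, Algebra.smul_def, mul_assoc, hpow,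
    IsScalarTower.algebraMap_apply K K[X] (RatFunc K), Polynomial.algebraMap_eq, mul_assoc]

end Aux

/-- If `f` is in normal form and the Möbius transformation `u = (aX+b)/(cX+d)` fixes `f`
under composition, then `a ≠ 0`, `d ≠ 0`, `b/d` is a root of the numerator of `f`, and if
`c ≠ 0` then `a/c` is a root of the denominator of `f`. -/
theorem fixing_unit_properties {K : Type*} [Field K]
    (f : RatFunc K) (hf1 : 1 ≤ f.deg) (hf : f.IsNormalForm)
    (a b c d : K) (habcd : a * d - b * c ≠ 0)
    (u : RatFunc K)
    (hu : u = (RatFunc.C a * RatFunc.X + RatFunc.C b) /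
        (RatFunc.C c * RatFunc.X + RatFunc.C d))
    (hfix : f.comp u = f) :
    a ≠ 0 ∧ d ≠ 0 ∧ f.num.eval (b / d) = 0 ∧ (c ≠ 0 → f.denom.eval (a / c) = 0) := by
  obtain ⟨hdeg, h0⟩ := hf
  set p := f.num with hpdef
  set q := f.denom with hqdef
  set n := p.natDegree with hndef
  set m := q.natDegree with hmdef
  have hmn : m ≤ n := le_of_lt hdeg
  have hqne : q ≠ 0 := f.denom_ne_zero
  have hpne : p ≠ 0 := by
    intro h
    rw [h] at hndef
    simp [hndef] at hdeg
  have hq0 : q.eval 0 ≠ 0 := by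
    obtain ⟨u', v', huv⟩ := f.isCoprime_num_denom
    intro h
    have h2 := congrArg (Polynomial.eval 0) huv
    rw [← hpdef, ← hqdef] at h2
    simp [h0, h] at h2
  have hcd : (C c * X + C d : K[X]) ≠ 0 := by
    intro h
    have hcc : c = 0 := by
      have := congrArg (fun r : K[X] => r.coeff 1) h
      simpa using this
    have hdd : d = 0 := by
      have := congrArg (Polynomial.eval 0) h
      simpa using this
    exact habcd (by rw [hcc, hdd]; ring)
  have hu' : u = algebraMap K[X] (RatFunc K) (C a * X + C b)
      / algebraMap K[X] (RatFunc K) (C c * X + C d) := by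
    rw [hu]
    simp [map_add, map_mul, RatFunc.algebraMap_C, RatFunc.algebraMap_X]
  have hkey1 := aeval_mul_pow a b c d hcd p n le_rfl
  have hkey2 := aeval_mul_pow a b c d hcd q m le_rfl
  rw [← hu'] at hkey1 hkey2
  -- Phi q m is nonzero
  have hQne : mobiusPhi a b c d q m ≠ 0 := by
    have hqm : q.coeff m ≠ 0 := by
      rw [hmdef, coeff_natDegree]
      exact leadingCoeff_ne_zero.mpr hqne
    rcases eq_or_ne c 0 with rfl | hc
    · have hane : a ≠ 0 := fun h => habcd (by rw [h]; ring)
      intro hQ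
      have h1 := coeff_mobiusPhi a b 0 d q m
      rw [hQ, coeff_zero] at h1
      rw [sum_zero_pow_eq (fun i => q.coeff i * a ^ i) m] at h1
      exact (mul_ne_zero hqm (pow_ne_zero _ hane)) h1.symm
    · intro hQ
      have h1 := eval_mobiusPhi a b c d q m (-d / c)
      rw [hQ, eval_zero] at h1
      have hcx : c * (-d / c) + d = 0 := by field_simp; ring
      rw [hcx, sum_zero_pow_eq (fun i => q.coeff i * (a * (-d / c) + b) ^ i) m] at h1
      have he : a * (-d / c) + b ≠ 0 := by
        intro he
        apply habcd
        field_simp at he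
        linear_combination -he
      exact (mul_ne_zero hqm (pow_ne_zero _ he)) h1.symm
  have haeq : Polynomial.aeval u q ≠ 0 := by
    intro h
    rw [h, zero_mul] at hkey2
    exact hQne ((map_eq_zero_iff _ (RatFunc.algebraMap_injective K)).mp hkey2.symm)
  have hfrac : Polynomial.aeval u p / Polynomial.aeval u q
      = algebraMap K[X] (RatFunc K) p / algebraMap K[X] (RatFunc K) q := by
    rw [RatFunc.comp] at hfix
    rw [hpdef, hqdef, hfix]
    exact (RatFunc.num_div_denom f).symm
  have hcross : Polynomial.aeval u p * algebraMap K[X] (RatFunc K) q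
      = algebraMap K[X] (RatFunc K) p * Polynomial.aeval u q := by
    rw [div_eq_div_iff haeq (RatFunc.algebraMap_ne_zero hqne)] at hfrac
    exact hfrac
  have key : mobiusPhi a b c d p n * q = p * (C c * X + C d) ^ (n - m) * mobiusPhi a b c d q m := by
    apply RatFunc.algebraMap_injective K
    rw [map_mul, map_mul, map_mul, map_pow, ← hkey1, ← hkey2]
    calc Polynomial.aeval u p * algebraMap K[X] (RatFunc K) (C c * X + C d) ^ n
          * algebraMap K[X] (RatFunc K) q
        = Polynomial.aeval u p * algebraMap K[X] (RatFunc K) q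
          * algebraMap K[X] (RatFunc K) (C c * X + C d) ^ n := by ring
      _ = algebraMap K[X] (RatFunc K) p * Polynomial.aeval u q
          * algebraMap K[X] (RatFunc K) (C c * X + C d) ^ n := by rw [hcross]
      _ = algebraMap K[X] (RatFunc K) p * algebraMap K[X] (RatFunc K) (C c * X + C d) ^ (n - m)
          * (Polynomial.aeval u q * algebraMap K[X] (RatFunc K) (C c * X + C d) ^ m) := by
          rw [← pow_sub_mul_pow (algebraMap K[X] (RatFunc K) (C c * X + C d)) hmn]; ring
  -- evaluate key at 0
  have hPeval : (mobiusPhi a b c d p n).eval 0 = 0 := by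
    have h := congrArg (Polynomial.eval 0) key
    simp only [eval_mul, eval_pow] at h
    rw [h0, zero_mul, zero_mul] at h
    exact (mul_eq_zero.mp h).resolve_right hq0
  have hsum0 : ∑ i ∈ Finset.range (n + 1), p.coeff i * b ^ i * d ^ (n - i) = 0 := by
    have h := eval_mobiusPhi a b c d p n 0
    simp only [mul_zero, zero_add] at h
    rw [hPeval] at h
    exact h.symm
  have hpn : p.coeff n ≠ 0 := by
    rw [hndef, coeff_natDegree]
    exact leadingCoeff_ne_zero.mpr hpne
  have hd : d ≠ 0 := by
    rintro rfl
    rw [sum_zero_pow_eq (fun i => p.coeff i * b ^ i) n] at hsum0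
    rcases mul_eq_zero.mp hsum0 with h | h
    · exact hpn h
    · exact habcd (by rw [pow_eq_zero_iff (by omega) |>.mp h]; ring)
  have hnum : p.eval (b / d) = 0 := by
    have h := sum_coeff_pow_eq p (le_refl n) b d hd
    rw [hsum0] at h
    exact ((mul_eq_zero.mp h.symm).resolve_left (pow_ne_zero n hd))
  -- contradiction machinery
  have hcontra : ∀ _ : c ≠ 0, (mobiusPhi a b c d q m).coeff m ≠ 0 → False := by
    intro hc hQm
    have hQdeg : (mobiusPhi a b c d q m).natDegree = m :=
      le_antisymm (natDegree_mobiusPhi_le a b c d q m) (le_natDegree_of_ne_zero hQm)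
    have hQne' : mobiusPhi a b c d q m ≠ 0 := fun h => hQm (by simp [h])
    have hDdeg : (C c * X + C d : K[X]).natDegree = 1 := natDegree_linear hc
    have h2 : (p * (C c * X + C d) ^ (n - m) * mobiusPhi a b c d q m).natDegree
        = n + (n - m) + m := by
      rw [natDegree_mul (mul_ne_zero hpne (pow_ne_zero _ hcd)) hQne',
        natDegree_mul hpne (pow_ne_zero _ hcd), natDegree_pow, hDdeg, hQdeg, mul_one]
    have h3 : (mobiusPhi a b c d p n * q).natDegree ≤ n + m :=
      natDegree_mul_le.trans (add_le_add (natDegree_mobiusPhi_le a b c d p n) le_rfl)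
    rw [key, h2] at h3
    omega
  have ha : a ≠ 0 := by
    rintro rfl
    have hc : c ≠ 0 := fun h => habcd (by rw [h]; ring)
    apply hcontra hc
    rw [coeff_mobiusPhi]
    have h1 : ∑ i ∈ Finset.range (m + 1), q.coeff i * (0 : K) ^ i * c ^ (m - i)
        = q.coeff 0 * c ^ m := by
      rw [Finset.sum_eq_single 0]
      · simp
      · intro i _ hne
        rw [zero_pow hne, mul_zero, zero_mul]
      · intro h
        exact absurd (Finset.mem_range.mpr (Nat.succ_pos m)) h
    rw [h1]
    exact mul_ne_zero (by rwa [coeff_zero_eq_eval_zero]) (pow_ne_zero _ hc)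
  have hdenom : c ≠ 0 → q.eval (a / c) = 0 := by
    intro hc
    by_contra hne
    apply hcontra hc
    rw [coeff_mobiusPhi, sum_coeff_pow_eq q le_rfl a c hc]
    exact mul_ne_zero (pow_ne_zero _ hc) hne
  exact ⟨ha, hd, hnum, hdenom⟩
end

section
/- Let K be a field, f ∈ K(x) in normal form of degree m ≥ 1, and let a, b ∈ K with a ≠ 0 define the polynomial unit u = aX + b ∈ K(x). If f∘u = f, then f.num.eval(b) = 0 and a^m = 1. -/
open Polynomial

/-- If `f` is in normal form of degree `m` and the polynomial unit `u = aX + b` (`a ≠ 0`)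
fixes `f` under composition, then `b` is a root of the numerator of `f` and `a^m = 1`. -/
theorem fixing_polynomial_unit_properties {K : Type*} [Field K]
    (f : RatFunc K) (hf1 : 1 ≤ f.deg) (hf : f.IsNormalForm)
    (a b : K) (ha : a ≠ 0)
    (u : RatFunc K) (hu : u = RatFunc.C a * RatFunc.X + RatFunc.C b)
    (hfix : f.comp u = f) :
    f.num.eval b = 0 ∧ a ^ f.deg = 1 := by
  set q : K[X] := C a * X + C b with hq
  have hqdeg : q.natDegree = 1 := natDegree_linear ha
  have hqlc : q.leadingCoeff = a := leadingCoeff_linear ha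
  have hu' : u = algebraMap K[X] (RatFunc K) q := by
    simp [hu, hq, RatFunc.algebraMap_C, RatFunc.algebraMap_X]
  have haev : ∀ p : K[X], aeval u p = algebraMap K[X] (RatFunc K) (p.comp q) := by
    intro p
    rw [hu', aeval_algebraMap_apply, comp_eq_aeval]
  have hNd0 : f.num ≠ 0 := fun h => by
    have := hf.1; rw [h] at this; simp at this
  have hDd0 : f.denom ≠ 0 := f.denom_ne_zero
  have hcomp0 : ∀ p : K[X], p ≠ 0 → p.comp q ≠ 0 := by
    intro p hp hc
    have hlc : (p.comp q).leadingCoeff = p.leadingCoeff * a ^ p.natDegree := by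
      rw [leadingCoeff_comp (by omega), hqlc]
    rw [hc, leadingCoeff_zero] at hlc
    exact (mul_ne_zero (leadingCoeff_ne_zero.mpr hp) (pow_ne_zero _ ha)) hlc.symm
  have hcompdeg : ∀ p : K[X], (p.comp q).natDegree = p.natDegree := by
    intro p; rw [natDegree_comp, hqdeg, mul_one]
  -- cross multiplication
  have hcross : f.num.comp q * f.denom = f.num * (f.denom.comp q) := by
    have h1 : algebraMap K[X] (RatFunc K) (f.num.comp q) /
        algebraMap K[X] (RatFunc K) (f.denom.comp q) =
        algebraMap K[X] (RatFunc K) f.num / algebraMap K[X] (RatFunc K) f.denom := by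
      rw [RatFunc.num_div_denom]
      rw [RatFunc.comp, haev, haev] at hfix
      exact hfix
    have hD1 : algebraMap K[X] (RatFunc K) (f.denom.comp q) ≠ 0 :=
      RatFunc.algebraMap_ne_zero (hcomp0 _ hDd0)
    have hD2 : algebraMap K[X] (RatFunc K) f.denom ≠ 0 :=
      RatFunc.algebraMap_ne_zero hDd0
    rw [div_eq_div_iff hD1 hD2] at h1
    apply RatFunc.algebraMap_injective K
    rw [map_mul, map_mul, h1]
  -- f.num ∣ f.num.comp q
  have hcop := f.isCoprime_num_denom
  have hdvd : f.num ∣ f.num.comp q := by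
    have : f.num ∣ f.num.comp q * f.denom := ⟨f.denom.comp q, hcross⟩
    exact (hcop.dvd_of_dvd_mul_right) this
  obtain ⟨r, hr⟩ := hdvd
  have hr0 : r ≠ 0 := fun h => by
    rw [h, mul_zero] at hr; exact hcomp0 _ hNd0 hr
  have hrdeg : r.natDegree = 0 := by
    have h2 : (f.num.comp q).natDegree = f.num.natDegree + r.natDegree := by
      rw [hr, natDegree_mul hNd0 hr0]
    rw [hcompdeg] at h2; omega
  set c : K := r.coeff 0 with hc
  have hrC : r = C c := Polynomial.eq_C_of_natDegree_eq_zero hrdeg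
  rw [hrC] at hr
  -- numerator relation: f.num.comp q = f.num * C c
  -- denominator relation
  have hden : f.denom.comp q = f.denom * C c := by
    have h3 : f.num * (f.denom.comp q) = f.num * (f.denom * C c) := by
      rw [← hcross, hr]; ring
    exact mul_left_cancel₀ hNd0 h3
  -- first conclusion
  have heval0 : f.num.eval b = c * 0 := by
    have := congrArg (Polynomial.eval 0) hr
    rw [eval_comp] at this
    simp [hq] at this
    rw [this, hf.2]; ring
  have hevalb : f.num.eval b = 0 := by rw [heval0, mul_zero]
  -- c = a ^ m
  have hm : f.deg = f.num.natDegree := by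
    have := hf.1; unfold RatFunc.deg; omega
  have hclc : c = a ^ f.num.natDegree := by
    have h4 := congrArg Polynomial.leadingCoeff hr
    rw [leadingCoeff_comp (by omega), hqlc, leadingCoeff_mul, leadingCoeff_C] at h4
    have hlcne := leadingCoeff_ne_zero.mpr hNd0
    exact (mul_left_cancel₀ hlcne h4).symm
  -- show c = 1
  have hc1 : c = 1 := by
    by_contra hcne
    rcases eq_or_ne a 1 with ha1 | ha1
    · -- a = 1 : then c = a^m = 1
      rw [ha1, one_pow] at hclc; exact hcne hclc
    · set x₀ : K := b / (1 - a) with hx0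
      have h1a : (1 : K) - a ≠ 0 := sub_ne_zero.mpr (Ne.symm ha1)
      have hfix0 : q.eval x₀ = x₀ := by
        simp only [hq, eval_add, eval_mul, eval_C, eval_X, hx0]
        field_simp; ring
      have key : ∀ p : K[X], p.comp q = p * C c → p.eval x₀ = 0 := by
        intro p hp
        have h5 := congrArg (Polynomial.eval x₀) hp
        rw [eval_comp, hfix0, eval_mul, eval_C] at h5
        have h6 : p.eval x₀ * (c - 1) = 0 := by linear_combination -h5
        rcases mul_eq_zero.mp h6 with h | h
        · exact h
        · exact absurd (sub_eq_zero.mp h) hcne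
      have hnum0 : f.num.eval x₀ = 0 := key _ hr
      have hden0 : f.denom.eval x₀ = 0 := key _ hden
      obtain ⟨s, t, hst⟩ := hcop
      have := congrArg (Polynomial.eval x₀) hst
      simp [hnum0, hden0] at this
  refine ⟨hevalb, ?_⟩
  rw [hm, ← hclc, hc1]
end

section
/- In ℚ(x) = RatFunc ℚ, let f = x³(x+6)³(x²−6x+36)³ / ((x−3)³(x²+3x+9)³), g₁ = x³, g₂ = x(x−12)/(x−3), g₃ = x(x+6)/(x−3), h₁ = x³(x+24)/(x−3), and h₂ = x(x²−6x+36)/(x²+3x+9). Then deg f = 12, deg g₁ = 3, deg g₂ = deg g₃ = 2, deg h₁ = 4, deg h₂ = 3, and f = g₁∘(g₂∘g₃) = h₁∘h₂. -/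
open Polynomial

local notation "x" => (RatFunc.X : RatFunc ℚ)

/-- A Bézout certificate scaled by a nonzero constant witnesses coprimality. -/
lemma isCoprime_of_scaled (n : ℕ) (hn : (n : ℚ) ≠ 0) {p q u v : ℚ[X]}
    (h : u * p + v * q = (n : ℚ[X])) : IsCoprime p q := by
  refine ⟨C (n : ℚ)⁻¹ * u, C (n : ℚ)⁻¹ * v, ?_⟩
  have h2 : C (n : ℚ)⁻¹ * u * p + C (n : ℚ)⁻¹ * v * q = C (n : ℚ)⁻¹ * (u * p + v * q) := by ring
  rw [h2, h, ← C_eq_natCast, ← C_mul, inv_mul_cancel₀ hn, C_1]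

/-- If `q` is monic and coprime to `p`, then `p/q` has numerator `p` and denominator `q`. -/
lemma num_denom_eq' {p q : ℚ[X]} (hq : q.Monic) (hc : IsCoprime p q) :
    (algebraMap ℚ[X] (RatFunc ℚ) p / algebraMap ℚ[X] (RatFunc ℚ) q).num = p ∧
    (algebraMap ℚ[X] (RatFunc ℚ) p / algebraMap ℚ[X] (RatFunc ℚ) q).denom = q := by
  have hg : gcd p q = 1 := by
    rw [← normalize_gcd, normalize_eq_one]; exact (gcd_isUnit_iff p q).mpr hc
  have key1 : C ((q / gcd p q).leadingCoeff)⁻¹ * (p / gcd p q) = p := by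
    rw [hg, EuclideanDomain.div_one, EuclideanDomain.div_one, hq.leadingCoeff, inv_one, C_1,
      one_mul]
  have key2 : C ((q / gcd p q).leadingCoeff)⁻¹ * (q / gcd p q) = q := by
    rw [hg, EuclideanDomain.div_one, hq.leadingCoeff, inv_one, C_1, one_mul]
  constructor
  · rw [RatFunc.num_div]; convert key1 using 3 <;> congr!
  · rw [RatFunc.denom_div _ hq.ne_zero]; convert key2 using 3 <;> congr!

set_option maxHeartbeats 2000000 in
/-- The degree-12 rational function
`f = x³(x+6)³(x²-6x+36)³ / ((x-3)³(x²+3x+9)³) ∈ ℚ(x)` admits the two complete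
decompositions `f = g₁ ∘ g₂ ∘ g₃ = h₁ ∘ h₂` of different lengths, where
`g₁ = x³`, `g₂ = x(x-12)/(x-3)`, `g₃ = x(x+6)/(x-3)`,
`h₁ = x³(x+24)/(x-3)` and `h₂ = x(x²-6x+36)/(x²+3x+9)`. -/
theorem two_decompositions_of_different_length
    (f g₁ g₂ g₃ h₁ h₂ : RatFunc ℚ)
    (hf : f = (x ^ 3 * (x + 6) ^ 3 * (x ^ 2 - 6 * x + 36) ^ 3) /
        ((x - 3) ^ 3 * (x ^ 2 + 3 * x + 9) ^ 3))
    (hg₁ : g₁ = x ^ 3)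
    (hg₂ : g₂ = x * (x - 12) / (x - 3))
    (hg₃ : g₃ = x * (x + 6) / (x - 3))
    (hh₁ : h₁ = x ^ 3 * (x + 24) / (x - 3))
    (hh₂ : h₂ = x * (x ^ 2 - 6 * x + 36) / (x ^ 2 + 3 * x + 9)) :
    f.deg = 12 ∧ g₁.deg = 3 ∧ g₂.deg = 2 ∧ g₃.deg = 2 ∧ h₁.deg = 4 ∧ h₂.deg = 3 ∧
      f = g₁.comp (g₂.comp g₃) ∧ f = h₁.comp h₂ := by
  -- nonzero denominators in `RatFunc ℚ`
  have hb : x - (3 : RatFunc ℚ) ≠ 0 := by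
    have h0 : ((X : ℚ[X]) - 3) ≠ 0 := fun h => by simpa using congrArg (eval 0) h
    simpa [map_sub, map_ofNat, RatFunc.algebraMap_X] using RatFunc.algebraMap_ne_zero h0
  have hc : x ^ 2 + 3 * x + 9 ≠ (0 : RatFunc ℚ) := by
    have h0 : ((X : ℚ[X]) ^ 2 + 3 * X + 9) ≠ 0 := fun h => by simpa using congrArg (eval 0) h
    simpa [map_add, map_mul, map_pow, map_ofNat, RatFunc.algebraMap_X] using
      RatFunc.algebraMap_ne_zero h0
  -- numerators and denominators
  have hf' : f = algebraMap ℚ[X] (RatFunc ℚ) (X ^ 3 * (X + 6) ^ 3 * (X ^ 2 - 6 * X + 36) ^ 3) /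
      algebraMap ℚ[X] (RatFunc ℚ) ((X - 3) ^ 3 * (X ^ 2 + 3 * X + 9) ^ 3) := by
    rw [hf]; simp [map_mul, map_add, map_sub, map_pow, map_ofNat, RatFunc.algebraMap_X]
  obtain ⟨hfn, hfd⟩ := (hf' ▸ num_denom_eq'
    (p := X ^ 3 * (X + 6) ^ 3 * (X ^ 2 - 6 * X + 36) ^ 3)
    (q := (X - 3) ^ 3 * (X ^ 2 + 3 * X + 9) ^ 3)
    (by monicity!)
    (isCoprime_of_scaled 7625597484987 (by norm_num)
      (u := 38 * X ^ 6 - 3024 * X ^ 3 + 73629)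
      (v := -38 * X ^ 9 - 24678 * X ^ 6 - 5348673 * X ^ 3 - 387420489)
      (by push_cast; ring)) : _ ∧ _)
  have hg₁' : g₁ = algebraMap ℚ[X] (RatFunc ℚ) (X ^ 3) := by
    rw [hg₁]; simp [map_pow, RatFunc.algebraMap_X]
  have hg₁n : g₁.num = X ^ 3 := by rw [hg₁', RatFunc.num_algebraMap]
  have hg₁d : g₁.denom = 1 := by rw [hg₁', RatFunc.denom_algebraMap]
  have hg₂' : g₂ = algebraMap ℚ[X] (RatFunc ℚ) (X * (X - 12)) /
      algebraMap ℚ[X] (RatFunc ℚ) (X - 3) := by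
    rw [hg₂]; simp [map_mul, map_sub, map_ofNat, RatFunc.algebraMap_X]
  obtain ⟨hg₂n, hg₂d⟩ := (hg₂' ▸ num_denom_eq' (p := X * (X - 12)) (q := X - 3)
    (by monicity!)
    (isCoprime_of_scaled 27 (by norm_num) (u := -1) (v := X - 9) (by push_cast; ring)) : _ ∧ _)
  have hg₃' : g₃ = algebraMap ℚ[X] (RatFunc ℚ) (X * (X + 6)) /
      algebraMap ℚ[X] (RatFunc ℚ) (X - 3) := by
    rw [hg₃]; simp [map_mul, map_add, map_sub, map_ofNat, RatFunc.algebraMap_X]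
  obtain ⟨hg₃n, hg₃d⟩ := (hg₃' ▸ num_denom_eq' (p := X * (X + 6)) (q := X - 3)
    (by monicity!)
    (isCoprime_of_scaled 27 (by norm_num) (u := 1) (v := -(X + 9)) (by push_cast; ring)) : _ ∧ _)
  have hh₁' : h₁ = algebraMap ℚ[X] (RatFunc ℚ) (X ^ 3 * (X + 24)) /
      algebraMap ℚ[X] (RatFunc ℚ) (X - 3) := by
    rw [hh₁]; simp [map_mul, map_add, map_sub, map_pow, map_ofNat, RatFunc.algebraMap_X]
  obtain ⟨hh₁n, hh₁d⟩ := (hh₁' ▸ num_denom_eq' (p := X ^ 3 * (X + 24)) (q := X - 3)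
    (by monicity!)
    (isCoprime_of_scaled 729 (by norm_num) (u := 1)
      (v := -(X ^ 3 + 27 * X ^ 2 + 81 * X + 243)) (by push_cast; ring)) : _ ∧ _)
  have hh₂' : h₂ = algebraMap ℚ[X] (RatFunc ℚ) (X * (X ^ 2 - 6 * X + 36)) /
      algebraMap ℚ[X] (RatFunc ℚ) (X ^ 2 + 3 * X + 9) := by
    rw [hh₂]; simp [map_mul, map_add, map_sub, map_pow, map_ofNat, RatFunc.algebraMap_X]
  obtain ⟨hh₂n, hh₂d⟩ := (hh₂' ▸ num_denom_eq' (p := X * (X ^ 2 - 6 * X + 36))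
    (q := X ^ 2 + 3 * X + 9)
    (by monicity!)
    (isCoprime_of_scaled 729 (by norm_num) (u := -2 * X - 3) (v := 2 * X ^ 2 - 15 * X + 81)
      (by push_cast; ring)) : _ ∧ _)
  -- the compositions
  have hcomp₁ : g₂.comp g₃ = g₃ * (g₃ - 12) / (g₃ - 3) := by
    rw [RatFunc.comp, hg₂n, hg₂d]
    simp [map_mul, map_sub, map_ofNat, aeval_X]
  have e2 : x * (x + 6) / (x - 3) - 12 = (x ^ 2 - 6 * x + 36) / (x - 3) := by
    rw [eq_div_iff hb, sub_mul, div_mul_cancel₀ _ hb]; ring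
  have e1 : x * (x + 6) / (x - 3) - 3 = (x ^ 2 + 3 * x + 9) / (x - 3) := by
    rw [eq_div_iff hb, sub_mul, div_mul_cancel₀ _ hb]; ring
  have hT : g₂.comp g₃ = x * (x + 6) * (x ^ 2 - 6 * x + 36) /
      ((x - 3) * (x ^ 2 + 3 * x + 9)) := by
    rw [hcomp₁, hg₃, e2, e1]
    field_simp
  have hfirst : f = g₁.comp (g₂.comp g₃) := by
    rw [RatFunc.comp, hg₁n, hg₁d]
    simp only [map_pow, aeval_X, map_one, div_one]
    rw [hT, div_pow, hf]
    congr 1 <;> ring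
  have e3 : x * (x ^ 2 - 6 * x + 36) / (x ^ 2 + 3 * x + 9) + 24 =
      (x + 6) ^ 3 / (x ^ 2 + 3 * x + 9) := by
    rw [eq_div_iff hc, add_mul, div_mul_cancel₀ _ hc]; ring
  have e4 : x * (x ^ 2 - 6 * x + 36) / (x ^ 2 + 3 * x + 9) - 3 =
      (x - 3) ^ 3 / (x ^ 2 + 3 * x + 9) := by
    rw [eq_div_iff hc, sub_mul, div_mul_cancel₀ _ hc]; ring
  have hsecond : f = h₁.comp h₂ := by
    rw [RatFunc.comp, hh₁n, hh₁d]
    simp only [map_mul, map_add, map_pow, map_sub, map_ofNat, aeval_X]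
    rw [hh₂, e3, e4, hf]
    field_simp
  refine ⟨?_, ?_, ?_, ?_, ?_, ?_, hfirst, hsecond⟩
  · rw [RatFunc.deg, hfn, hfd]
    have d1 : ((X : ℚ[X]) ^ 3 * (X + 6) ^ 3 * (X ^ 2 - 6 * X + 36) ^ 3).natDegree = 12 := by
      compute_degree!
    have d2 : (((X : ℚ[X]) - 3) ^ 3 * (X ^ 2 + 3 * X + 9) ^ 3).natDegree = 9 := by
      compute_degree!
    rw [d1, d2]; omega
  · rw [RatFunc.deg, hg₁n, hg₁d]
    have d1 : ((X : ℚ[X]) ^ 3).natDegree = 3 := by compute_degree!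
    rw [d1, natDegree_one]; omega
  · rw [RatFunc.deg, hg₂n, hg₂d]
    have d1 : ((X : ℚ[X]) * (X - 12)).natDegree = 2 := by compute_degree!
    have d2 : ((X : ℚ[X]) - 3).natDegree = 1 := by compute_degree!
    rw [d1, d2]; omega
  · rw [RatFunc.deg, hg₃n, hg₃d]
    have d1 : ((X : ℚ[X]) * (X + 6)).natDegree = 2 := by compute_degree!
    have d2 : ((X : ℚ[X]) - 3).natDegree = 1 := by compute_degree!
    rw [d1, d2]; omega
  · rw [RatFunc.deg, hh₁n, hh₁d]
    have d1 : ((X : ℚ[X]) ^ 3 * (X + 24)).natDegree = 4 := by compute_degree!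
    have d2 : ((X : ℚ[X]) - 3).natDegree = 1 := by compute_degree!
    rw [d1, d2]; omega
  · rw [RatFunc.deg, hh₂n, hh₂d]
    have d1 : ((X : ℚ[X]) * (X ^ 2 - 6 * X + 36)).natDegree = 3 := by compute_degree!
    have d2 : ((X : ℚ[X]) ^ 2 + 3 * X + 9).natDegree = 2 := by compute_degree!
    rw [d1, d2]; omega
end

section
/- In ℚ(x) = RatFunc ℚ, the degree-4 rational function h₁ = x³(x+24)/(x−3) is indecomposable; that is, there exist no g, h ∈ ℚ(x) with deg g = 2 and deg h = 2 such that h₁ = g∘h. -/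
open Polynomial

local notation "x" => (RatFunc.X : RatFunc ℚ)

/- ### Auxiliary lemmas -/

lemma quad_decomp (G : ℚ[X]) (h : G.natDegree ≤ 2) :
    G = C (G.coeff 0) + C (G.coeff 1) * X + C (G.coeff 2) * X^2 := by
  ext n
  simp only [coeff_add, coeff_C_mul, coeff_C, coeff_X, coeff_X_pow, mul_ite, mul_one, mul_zero]
  match n with
  | 0 => simp
  | 1 => simp
  | 2 => simp
  | (m+3) =>
    rw [coeff_eq_zero_of_natDegree_lt (lt_of_le_of_lt h (by omega))]
    simp

lemma ord_le_natDegree {p : ℚ[X]} (hp : p ≠ 0) : rootMultiplicity 0 p ≤ p.natDegree := by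
  have h := Polynomial.pow_rootMultiplicity_dvd p 0
  have := Polynomial.natDegree_le_of_dvd h hp
  simpa [natDegree_pow] using this

lemma both_vanish {A B : ℚ[X]} (hA : A ≠ 0) (hB : B ≠ 0)
    (hA2 : A.natDegree ≤ 2) (hB2 : B.natDegree ≤ 2)
    (h3 : rootMultiplicity 0 (A * B) = 3) : A.eval 0 = 0 ∧ B.eval 0 = 0 := by
  rw [rootMultiplicity_mul (mul_ne_zero hA hB)] at h3
  have la := ord_le_natDegree hA
  have lb := ord_le_natDegree hB
  constructor
  · exact (rootMultiplicity_pos hA).mp (by omega)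
  · exact (rootMultiplicity_pos hB).mp (by omega)

lemma ndeg_lin (a b : ℚ) {P Q : ℚ[X]} (hP : P.natDegree ≤ 2) (hQ : Q.natDegree ≤ 2) :
    (C a * P + C b * Q).natDegree ≤ 2 := by
  refine le_trans (natDegree_add_le _ _) (max_le ?_ ?_) <;>
    refine le_trans (natDegree_mul_le) (by simp [natDegree_C]; omega)

lemma ndeg_quad (a b c' : ℚ) {P Q : ℚ[X]} (hP : P.natDegree ≤ 2) (hQ : Q.natDegree ≤ 2) :
    (C a * Q^2 + C b * (P*Q) + C c' * P^2).natDegree ≤ 4 := by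
  have t1 : (C a * Q^2).natDegree ≤ 4 :=
    le_trans natDegree_mul_le (by simp [natDegree_C, natDegree_pow]; omega)
  have t2 : (C b * (P*Q)).natDegree ≤ 4 := by
    refine le_trans natDegree_mul_le ?_
    simp only [natDegree_C, zero_add]
    exact le_trans natDegree_mul_le (by omega)
  have t3 : (C c' * P^2).natDegree ≤ 4 :=
    le_trans natDegree_mul_le (by simp [natDegree_C, natDegree_pow]; omega)
  exact le_trans (natDegree_add_le _ _)
    (max_le (le_trans (natDegree_add_le _ _) (max_le t1 t2)) t3)

lemma ordMc (c : ℚ) (hc : c ≠ 0) :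
    rootMultiplicity 0 (X^3 * (X - C (-24)) * C c : ℚ[X]) = 3 := by
  have h1 : ((X : ℚ[X])^3) ≠ 0 := pow_ne_zero 3 X_ne_zero
  have h2 : (X - C (-24) : ℚ[X]) ≠ 0 := X_sub_C_ne_zero _
  have h3 : (C c : ℚ[X]) ≠ 0 := fun h => hc (C_eq_zero.mp h)
  rw [rootMultiplicity_mul (mul_ne_zero (mul_ne_zero h1 h2) h3),
    rootMultiplicity_mul (mul_ne_zero h1 h2),
    show ((X:ℚ[X])^3) = (X - C 0)^3 by rw [C_0, sub_zero],
    rootMultiplicity_X_sub_C_pow,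
    rootMultiplicity_eq_zero (by simp [IsRoot] : ¬(X - C (-24) : ℚ[X]).IsRoot 0),
    rootMultiplicity_eq_zero (by simp [IsRoot, hc] : ¬(C c : ℚ[X]).IsRoot 0)]

/-- The homogenized evaluation of a quadratic at a rational function. -/
lemma aeval_quad (G : ℚ[X]) (hG : G.natDegree ≤ 2) (h : RatFunc ℚ) :
    (Polynomial.aeval h G) * (algebraMap ℚ[X] (RatFunc ℚ) h.denom)^2
      = algebraMap ℚ[X] (RatFunc ℚ)
          (C (G.coeff 0) * h.denom^2 + C (G.coeff 1) * (h.num * h.denom)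
            + C (G.coeff 2) * h.num^2) := by
  have hden : (algebraMap ℚ[X] (RatFunc ℚ) h.denom) ≠ 0 :=
    RatFunc.algebraMap_ne_zero (h.denom_ne_zero)
  have hnum : algebraMap ℚ[X] (RatFunc ℚ) h.num / algebraMap ℚ[X] (RatFunc ℚ) h.denom = h :=
    h.num_div_denom
  have hC : ∀ a : ℚ, algebraMap ℚ (RatFunc ℚ) a = algebraMap ℚ[X] (RatFunc ℚ) (C a) := by
    intro a
    rw [← Polynomial.algebraMap_eq, ← IsScalarTower.algebraMap_apply]
  have e1 : algebraMap ℚ[X] (RatFunc ℚ) h.num = h * algebraMap ℚ[X] (RatFunc ℚ) h.denom := by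
    have h2 := congrArg (· * algebraMap ℚ[X] (RatFunc ℚ) h.denom) hnum
    simp only [div_mul_cancel₀ _ hden] at h2
    exact h2
  conv_lhs => rw [quad_decomp G hG]
  simp only [map_add, map_mul, map_pow, aeval_C, aeval_X, e1, ← hC]
  ring

/-- Extraction of the basic polynomial identity from the composition equation. -/
lemma extract_key (g h : RatFunc ℚ) (h₁ : RatFunc ℚ)
    (hh₁ : h₁ = x ^ 3 * (x + 24) / (x - 3))
    (hcomp : h₁ = g.comp h)
    (Ghat Hhat : ℚ[X])
    (hGa : (Polynomial.aeval h g.num) * (algebraMap ℚ[X] (RatFunc ℚ) h.denom)^2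
      = algebraMap ℚ[X] (RatFunc ℚ) Ghat)
    (hHa : (Polynomial.aeval h g.denom) * (algebraMap ℚ[X] (RatFunc ℚ) h.denom)^2
      = algebraMap ℚ[X] (RatFunc ℚ) Hhat) :
    X^3 * (X + 24) * Hhat = (X - 3) * Ghat ∧ Hhat ≠ 0 := by
  set ι := algebraMap ℚ[X] (RatFunc ℚ) with hι
  have hden : ι h.denom ≠ 0 := RatFunc.algebraMap_ne_zero (h.denom_ne_zero)
  have hN : (x ^ 3 * (x + 24) : RatFunc ℚ) = ι (X^3 * (X+24)) := by
    simp [map_mul, map_pow, map_add, map_ofNat, RatFunc.algebraMap_X, hι]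
  have hD : (x - 3 : RatFunc ℚ) = ι (X - 3) := by
    simp [map_sub, map_ofNat, RatFunc.algebraMap_X, hι]
  have hD0 : (X - 3 : ℚ[X]) ≠ 0 := by
    intro hc; have := congrArg (Polynomial.eval 0) hc; simp at this
  have hN0 : (X^3 * (X+24) : ℚ[X]) ≠ 0 := by
    intro hc; have := congrArg (Polynomial.eval 1) hc; norm_num at this
  have hcomp2 : ι (X^3 * (X+24)) / ι (X - 3) = ι Ghat / ι Hhat := by
    rw [← hN, ← hD, ← hh₁, hcomp]
    rw [RatFunc.comp, ← hGa, ← hHa]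
    rw [mul_div_mul_right _ _ (pow_ne_zero 2 hden)]
    congr! <;> exact Subsingleton.elim _ _
  have hH0 : Hhat ≠ 0 := by
    intro hc
    rw [hc, map_zero, div_zero, _root_.div_eq_zero_iff] at hcomp2
    rcases hcomp2 with h1 | h1
    · exact hN0 (RatFunc.algebraMap_injective ℚ (by simpa [hι] using h1))
    · exact hD0 (RatFunc.algebraMap_injective ℚ (by simpa [hι] using h1))
  refine ⟨?_, hH0⟩
  rw [div_eq_div_iff (RatFunc.algebraMap_ne_zero hD0) (RatFunc.algebraMap_ne_zero hH0)] at hcomp2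
  apply RatFunc.algebraMap_injective ℚ
  simp only [map_mul] at hcomp2 ⊢
  linear_combination hcomp2

lemma Ghat_form (Ghat Hhat : ℚ[X]) (hG4 : Ghat.natDegree ≤ 4) (hGne : Ghat ≠ 0)
    (key : X^3 * (X + 24) * Hhat = (X - 3) * Ghat) :
    ∃ c : ℚ, c ≠ 0 ∧ Ghat = X^3 * (X - C (-24)) * C c := by
  have hX : (X : ℚ[X]) = X - C 0 := by simp
  have h3 : (X - 3 : ℚ[X]) = X - C 3 := by rw [map_ofNat]
  have cop1 : IsCoprime ((X : ℚ[X])^3) (X - 3) := by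
    rw [h3, show ((X:ℚ[X])^3) = (X - C 0)^3 by rw [C_0, sub_zero]]
    exact IsCoprime.pow_left
      (isCoprime_X_sub_C_of_isUnit_sub (by norm_num : ((0:ℚ) - 3) ≠ 0).isUnit)
  have hdvd1 : (X : ℚ[X])^3 ∣ Ghat := by
    refine cop1.dvd_of_dvd_mul_right ?_
    exact ⟨(X + 24) * Hhat, by linear_combination -key⟩
  have hroot : Ghat.IsRoot (-24) := by
    have h0 := congrArg (Polynomial.eval (-24)) key
    simp only [eval_mul, eval_pow, eval_add, eval_sub, eval_X, eval_ofNat] at h0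
    norm_num at h0
    simp only [IsRoot]
    linarith
  have hdvd2 : (X - C (-24) : ℚ[X]) ∣ Ghat := dvd_iff_isRoot.mpr hroot
  have cop2 : IsCoprime ((X:ℚ[X])^3) (X - C (-24)) := by
    rw [show ((X:ℚ[X])^3) = (X - C 0)^3 by rw [C_0, sub_zero]]
    exact IsCoprime.pow_left
      (isCoprime_X_sub_C_of_isUnit_sub (by norm_num : ((0:ℚ) - (-24)) ≠ 0).isUnit)
  obtain ⟨k, hk⟩ := cop2.mul_dvd hdvd1 hdvd2
  have hk0 : k ≠ 0 := by
    rintro rfl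
    rw [mul_zero] at hk
    exact hGne hk
  have hdeg : k.natDegree = 0 := by
    have h1 : Ghat.natDegree = 4 + k.natDegree := by
      rw [hk, natDegree_mul (mul_ne_zero (pow_ne_zero 3 X_ne_zero) (X_sub_C_ne_zero _)) hk0,
        natDegree_mul (pow_ne_zero 3 X_ne_zero) (X_sub_C_ne_zero _),
        natDegree_pow, natDegree_X, natDegree_X_sub_C]
    omega
  refine ⟨k.coeff 0, ?_, ?_⟩
  · intro hc
    exact hk0 (by rw [eq_C_of_natDegree_eq_zero hdeg, hc, map_zero])
  · rw [hk, ← eq_C_of_natDegree_eq_zero hdeg]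
lemma no_quad (P Q : ℚ[X]) (hP : P.natDegree ≤ 2) (hQ : Q.natDegree ≤ 2)
    (hco : ¬(P.eval 0 = 0 ∧ Q.eval 0 = 0)) (a0 a1 a2 c : ℚ) (hc : c ≠ 0)
    (hG : C a0 * Q^2 + C a1 * (P*Q) + C a2 * P^2 = X^3 * (X - C (-24)) * C c) : False := by
  have h1 : ((X : ℚ[X])^3) ≠ 0 := pow_ne_zero 3 X_ne_zero
  have h2 : (X - C (-24) : ℚ[X]) ≠ 0 := X_sub_C_ne_zero _
  have h3 : (C c : ℚ[X]) ≠ 0 := fun h => hc (C_eq_zero.mp h)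
  have hMc0 : (X^3 * (X - C (-24)) * C c : ℚ[X]) ≠ 0 := mul_ne_zero (mul_ne_zero h1 h2) h3
  have hMceval : (X^3 * (X - C (-24)) * C c : ℚ[X]).eval 0 = 0 := by simp
  by_cases h2a : a2 = 0
  · by_cases h1a : a1 = 0
    · -- Ghat = C a0 * Q^2
      rw [h2a, h1a] at hG
      simp only [C_0, zero_mul, add_zero] at hG
      have hQ0 : Q ≠ 0 := by
        rintro rfl
        rw [zero_pow two_ne_zero, mul_zero] at hG
        exact hMc0 hG.symm
      have ha0 : (C a0 : ℚ[X]) ≠ 0 := by rintro h; rw [h, zero_mul] at hG; exact hMc0 hG.symm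
      have hCa0 : rootMultiplicity 0 (C a0 : ℚ[X]) = 0 :=
        rootMultiplicity_eq_zero (p := (C a0 : ℚ[X]))
          (by simp [IsRoot]; exact fun h => ha0 (by rw [h, C_0]))
      have := congrArg (rootMultiplicity 0) hG
      rw [ordMc c hc, sq, ← mul_assoc, rootMultiplicity_mul (by
            rw [mul_assoc, ← sq]; rw [← hG] at hMc0; exact hMc0),
        rootMultiplicity_mul (mul_ne_zero ha0 hQ0), hCa0] at this
      omega
    · -- a2 = 0, a1 ≠ 0 : Q * (C a1 * P + C a0 * Q) = Mc
      rw [h2a] at hG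
      simp only [C_0, zero_mul, add_zero] at hG
      have hG' : Q * (C a1 * P + C a0 * Q) = X^3 * (X - C (-24)) * C c := by
        rw [← hG]; ring
      have hprod : Q * (C a1 * P + C a0 * Q) ≠ 0 := hG' ▸ hMc0
      obtain ⟨hQv, hWv⟩ := both_vanish (left_ne_zero_of_mul hprod) (right_ne_zero_of_mul hprod)
        hQ (ndeg_lin a1 a0 hP hQ) (by rw [hG', ordMc c hc])
      simp only [eval_add, eval_mul, eval_C, hQv, mul_zero, add_zero] at hWv
      exact hco ⟨(mul_eq_zero.mp hWv).resolve_left h1a, hQv⟩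
  · -- a2 ≠ 0
    obtain ⟨U, hU⟩ : ∃ U : ℚ[X], U = C (2*a2) * P + C a1 * Q := ⟨_, rfl⟩
    obtain ⟨D0, hD0def⟩ : ∃ D0 : ℚ, D0 = a1^2 - 4*a0*a2 := ⟨_, rfl⟩
    have hUeval : U.eval 0 = 2*a2*P.eval 0 + a1*Q.eval 0 := by rw [hU]; simp
    have hquad : U^2 - C D0 * Q^2 = C (4*a2) * (X^3 * (X - C (-24)) * C c) := by
      rw [← hG, hU, hD0def]
      simp only [map_mul, map_sub, map_pow, map_add, map_ofNat]
      ring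
    have hUdeg : U.natDegree ≤ 2 := hU ▸ ndeg_lin (2*a2) a1 hP hQ
    have hRHS0 : C (4*a2) * (X^3 * (X - C (-24)) * C c) ≠ 0 :=
      mul_ne_zero (fun h => (mul_ne_zero (by norm_num : (4:ℚ) ≠ 0) h2a) (C_eq_zero.mp h)) hMc0
    have ordRHS : rootMultiplicity 0 (C (4*a2) * (X^3 * (X - C (-24)) * C c)) = 3 := by
      rw [rootMultiplicity_mul hRHS0, ordMc c hc,
        rootMultiplicity_eq_zero (p := (C (4*a2) : ℚ[X]))
          (by simp [IsRoot, h2a])]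
    by_cases hD0 : D0 = 0
    · rw [hD0, C_0, zero_mul, sub_zero] at hquad
      have hU0 : U ≠ 0 := by
        intro h
        rw [h, zero_pow two_ne_zero] at hquad
        exact hRHS0 hquad.symm
      have := congrArg (rootMultiplicity 0) hquad
      rw [ordRHS, sq, rootMultiplicity_mul (mul_ne_zero hU0 hU0)] at this
      omega
    · by_cases hsq : IsSquare D0
      · obtain ⟨d, hd⟩ := hsq
        have hd0 : d ≠ 0 := by rintro rfl; rw [mul_zero] at hd; exact hD0 hd
        have hfac : (U - C d * Q) * (U + C d * Q) = C (4*a2) * (X^3 * (X - C (-24)) * C c) := by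
          rw [← hquad, hd, map_mul]; ring
        have hprod : (U - C d * Q) * (U + C d * Q) ≠ 0 := hfac ▸ hRHS0
        have hd1 : (U - C d * Q).natDegree ≤ 2 := by
          refine le_trans (natDegree_sub_le _ _) (max_le hUdeg ?_)
          exact le_trans natDegree_mul_le (by simp [natDegree_C]; omega)
        have hd2 : (U + C d * Q).natDegree ≤ 2 := by
          refine le_trans (natDegree_add_le _ _) (max_le hUdeg ?_)
          exact le_trans natDegree_mul_le (by simp [natDegree_C]; omega)
        obtain ⟨hv1, hv2⟩ := both_vanish (left_ne_zero_of_mul hprod) (right_ne_zero_of_mul hprod)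
          hd1 hd2 (by rw [hfac]; exact ordRHS)
        simp only [eval_sub, eval_add, eval_mul, eval_C] at hv1 hv2
        have hQv : Q.eval 0 = 0 := by
          have : d * Q.eval 0 = 0 := by linarith
          exact (mul_eq_zero.mp this).resolve_left hd0
        have hPv : P.eval 0 = 0 := by
          have hU0 : U.eval 0 = 0 := by linarith
          rw [hUeval, hQv, mul_zero, add_zero] at hU0
          rcases mul_eq_zero.mp hU0 with h | h
          · exact absurd h (mul_ne_zero (by norm_num) h2a)
          · exact h
        exact hco ⟨hPv, hQv⟩
      · -- D0 not a square
        have heval := congrArg (Polynomial.eval 0) hquad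
        simp only [eval_sub, eval_mul, eval_pow, eval_C, hMceval, mul_zero] at heval
        rw [hD0def] at heval
        by_cases hQv : Q.eval 0 = 0
        · have hUv : U.eval 0 = 0 := by
            rw [hQv] at heval
            have : (U.eval 0)^2 = 0 := by linarith [heval]
            exact pow_eq_zero_iff (by norm_num) |>.mp this
          rw [hUeval, hQv, mul_zero, add_zero] at hUv
          rcases mul_eq_zero.mp hUv with h | h
          · exact absurd h (mul_ne_zero (by norm_num) h2a)
          · exact hco ⟨h, hQv⟩
        · refine hsq ⟨U.eval 0 / Q.eval 0, ?_⟩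
          rw [hD0def]
          field_simp
          linear_combination -heval


/-- The degree-4 rational function `h₁ = x³(x+24)/(x-3) ∈ ℚ(x)` is indecomposable: it is
not the composition of two rational functions of degree 2. -/
theorem h₁_indecomposable (h₁ : RatFunc ℚ)
    (hh₁ : h₁ = x ^ 3 * (x + 24) / (x - 3)) :
    ¬ ∃ g h : RatFunc ℚ, g.deg = 2 ∧ h.deg = 2 ∧ h₁ = g.comp h := by
  rintro ⟨g, h, hg2, hh2, hcomp⟩
  have hGdeg : g.num.natDegree ≤ 2 := (le_max_left _ _).trans hg2.le
  have hHdeg : g.denom.natDegree ≤ 2 := (le_max_right _ _).trans hg2.le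
  have hP : h.num.natDegree ≤ 2 := (le_max_left _ _).trans hh2.le
  have hQ : h.denom.natDegree ≤ 2 := (le_max_right _ _).trans hh2.le
  have hco : ¬(h.num.eval 0 = 0 ∧ h.denom.eval 0 = 0) := by
    rintro ⟨hp, hq⟩
    obtain ⟨u, v, huv⟩ := h.isCoprime_num_denom
    have := congrArg (Polynomial.eval 0) huv
    simp [hp, hq] at this
  obtain ⟨key, hH0⟩ := extract_key g h h₁ hh₁ hcomp _ _
    (aeval_quad g.num hGdeg h) (aeval_quad g.denom hHdeg h)
  have hN0 : (X^3 * (X+24) : ℚ[X]) ≠ 0 := by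
    intro hc; have := congrArg (Polynomial.eval 1) hc; norm_num at this
  have hGne : (C (g.num.coeff 0) * h.denom^2 + C (g.num.coeff 1) * (h.num * h.denom)
      + C (g.num.coeff 2) * h.num^2) ≠ 0 := by
    intro hc
    rw [hc, mul_zero] at key
    exact mul_ne_zero hN0 hH0 key
  obtain ⟨c, hc, hGc⟩ := Ghat_form _ _ (ndeg_quad _ _ _ hP hQ) hGne key
  exact no_quad h.num h.denom hP hQ hco _ _ _ c hc hGc
end
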